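/- arXiv:2401.15801 — 7 statements merged into one kernel-verified Lean document; each statement's English description precedes it below -/
import Mathlib

section
/- For every Borel probability measure μ on ℝ^d (equipped with the ℓ∞ metric) and every α > 0, the lower Wasserstein dimension, the α-entropic dimension and the α-upper Wasserstein dimension satisfy d_*(μ) ≤ d̄_α(μ) ≤ d*_α(μ). -/
open Filter Topology MeasureTheory Set
open scoped ENNReal NNReal

noncomputable section

/-- Minimal number of closed balls of radius `ε` needed to cover `S`. -/
def coverN {X : Type*} [PseudoMetricSpace X] (ε : ℝ) (S : Set X) : ℕ∞ :=
  ⨅ (t : Finset X) (_ : S ⊆ ⋃ x ∈ t, Metric.closedBall x ε), (t.card : ℕ∞)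

/-- The `(ε,τ)`-covering number of a measure `μ`. -/
def measCoverN {X : Type*} [PseudoMetricSpace X] [MeasurableSpace X]
    (μ : Measure X) (ε τ : ℝ) : ℕ∞ :=
  ⨅ (S : Set X) (_ : MeasurableSet S) (_ : ENNReal.ofReal (1 - τ) ≤ μ S), coverN ε S

/-- Extended logarithm `ℝ≥0∞ → EReal`. -/
def elog (x : ℝ≥0∞) : EReal :=
  if x = 0 then ⊥ else if x = ⊤ then ⊤ else ((Real.log x.toReal : ℝ) : EReal)

/-- `log N / log (1/ε)` as an extended real. -/
def dimRatio (N : ℕ∞) (ε : ℝ) : EReal :=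
  elog (N : ℝ≥0∞) * (((Real.log (1 / ε))⁻¹ : ℝ) : EReal)

/-- The `α`-entropic dimension of a measure. -/
def entropicDim {X : Type*} [PseudoMetricSpace X] [MeasurableSpace X]
    (μ : Measure X) (α : ℝ) : EReal :=
  limsup (fun ε : ℝ => dimRatio (measCoverN μ ε (ε ^ α)) ε) (𝓝[>] (0 : ℝ))

/-- The `α`-upper Wasserstein dimension of a measure. -/
def upperWDim {X : Type*} [PseudoMetricSpace X] [MeasurableSpace X]
    (μ : Measure X) (α : ℝ) : EReal :=
  sInf {x : EReal | ∃ s : ℝ, x = (s : EReal) ∧ 2 * α < s ∧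
    limsup (fun ε : ℝ => dimRatio (measCoverN μ ε (ε ^ (s * α / (s - 2 * α)))) ε)
      (𝓝[>] (0 : ℝ)) ≤ (s : EReal)}

/-- The lower Wasserstein dimension of a measure. -/
def lowerWDim {X : Type*} [PseudoMetricSpace X] [MeasurableSpace X]
    (μ : Measure X) : EReal :=
  limsup (fun τ : ℝ =>
    liminf (fun ε : ℝ => dimRatio (measCoverN μ ε τ) ε) (𝓝[>] (0 : ℝ))) (𝓝[>] (0 : ℝ))

/-- The support of a measure: points all of whose neighbourhoods have positive mass. -/
def msupport {X : Type*} [PseudoMetricSpace X] [MeasurableSpace X] (μ : Measure X) : Set X :=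
  {x | ∀ r : ℝ, 0 < r → 0 < μ (Metric.ball x r)}

/-- The upper Minkowski dimension of (the support of) a measure. -/
def minkowskiDim {X : Type*} [PseudoMetricSpace X] [MeasurableSpace X]
    (μ : Measure X) : EReal :=
  limsup (fun ε : ℝ => dimRatio (coverN ε (msupport μ)) ε) (𝓝[>] (0 : ℝ))

/-- The upper packing dimension of a measure. -/
def packingDim {X : Type*} [PseudoMetricSpace X] [MeasurableSpace X]
    (μ : Measure X) : EReal :=
  essSup (fun x =>
    limsup (fun r : ℝ => elog (μ (Metric.closedBall x r)) * (((Real.log r)⁻¹ : ℝ) : EReal))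
      (𝓝[>] (0 : ℝ))) μ

/-- The lower regularity dimension of a measure. -/
def lowerRegDim {X : Type*} [PseudoMetricSpace X] [MeasurableSpace X]
    (μ : Measure X) : EReal :=
  sSup {x : EReal | ∃ s : ℝ, x = (s : EReal) ∧ ∃ C : ℝ, 0 < C ∧
    ∀ x0 ∈ msupport μ, ∀ r R : ℝ, 0 < r → r < R →
      ENNReal.ofReal (C * (R / r) ^ s) ≤
        μ (Metric.closedBall x0 R) / μ (Metric.closedBall x0 r)}

/-- Partial derivative in coordinate `i`. -/
def pderiv' {d : ℕ} (i : Fin d) (f : (Fin d → ℝ) → ℝ) : (Fin d → ℝ) → ℝ :=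
  fun x => fderiv ℝ f x (Pi.single i 1)

/-- Multi-index partial derivative `∂^s f`. -/
def mpderiv {d : ℕ} (s : Fin d → ℕ) (f : (Fin d → ℝ) → ℝ) : (Fin d → ℝ) → ℝ :=
  (List.finRange d).foldr (fun i g => (pderiv' i)^[s i] g) f

/-- The `β`-Hölder norm of `f : ℝ^d → ℝ` (with `ℓ∞` distances), valued in `ℝ≥0∞`. -/
def holderNorm {d : ℕ} (β : ℝ) (f : (Fin d → ℝ) → ℝ) : ℝ≥0∞ :=
  (∑' s : {s : Fin d → ℕ // ∑ i, s i ≤ ⌊β⌋₊}, ⨆ x : Fin d → ℝ, (‖mpderiv s.1 f x‖₊ : ℝ≥0∞)) +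
  ∑' s : {s : Fin d → ℕ // ∑ i, s i = ⌊β⌋₊}, ⨆ (x : Fin d → ℝ) (y : Fin d → ℝ) (_ : x ≠ y),
      (‖mpderiv s.1 f x - mpderiv s.1 f y‖₊ : ℝ≥0∞) / (nndist x y : ℝ≥0∞) ^ (β - (⌊β⌋₊ : ℝ))

/-- The class `H^β(ℝ^d, ℝ, C)` of `β`-Hölder functions with norm at most `C`. -/
def HolderClass (d : ℕ) (β C : ℝ) : Set ((Fin d → ℝ) → ℝ) :=
  {f | ContDiff ℝ (⌊β⌋₊ : ℕ) f ∧ holderNorm β f ≤ ENNReal.ofReal C}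

/-- The integral probability metric `‖P - Q‖_F`. -/
def ipm {X : Type*} [MeasurableSpace X] (F : Set (X → ℝ)) (P Q : Measure X) : ℝ :=
  ⨆ f : F, |∫ x, f.1 x ∂P - ∫ x, f.1 x ∂Q|

/-- The empirical measure of a sample `x : Fin n → X`. -/
def empMeas {X : Type*} [MeasurableSpace X] {n : ℕ} (x : Fin n → X) : Measure X :=
  (n : ℝ≥0∞)⁻¹ • ∑ i : Fin n, Measure.dirac (x i)

/-- Total variation distance between two measures. -/
def tvDist {X : Type*} [MeasurableSpace X] (P Q : Measure X) : ℝ :=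
  ⨆ A : {A : Set X // MeasurableSet A}, |(P A.1).toReal - (Q A.1).toReal|

end

open Filter Topology MeasureTheory Set
open scoped ENNReal

/-- `measCoverN` is antitone in `τ`. -/
lemma measCoverN_anti {X : Type*} [PseudoMetricSpace X] [MeasurableSpace X]
    (μ : Measure X) (ε : ℝ) {τ τ' : ℝ} (h : τ ≤ τ') :
    measCoverN μ ε τ' ≤ measCoverN μ ε τ := by
  refine le_iInf fun S => le_iInf fun hS => le_iInf fun hm => ?_
  refine iInf_le_of_le S (iInf_le_of_le hS (iInf_le_of_le ?_ le_rfl))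
  exact le_trans (ENNReal.ofReal_le_ofReal (by linarith)) hm

/-- `elog` is monotone. -/
lemma elog_mono : Monotone elog := by
  intro x y h
  unfold elog
  rcases eq_or_ne x 0 with hx | hx
  · simp [hx]
  have hy0 : y ≠ 0 := fun h0 => hx (by rw [h0] at h; exact le_antisymm h zero_le)
  rcases eq_or_ne y ⊤ with hy | hy
  · simp only [hy, if_neg hy0, if_pos rfl]
    split <;> simp
  have hx' : x ≠ ⊤ := ne_top_of_le_ne_top hy h
  simp only [if_neg hx, if_neg hx', if_neg hy0, if_neg hy, EReal.coe_le_coe_iff]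
  exact Real.log_le_log (ENNReal.toReal_pos hx hx') (ENNReal.toReal_mono hy h)

/-- `dimRatio` is monotone in the covering number, for `ε ∈ (0,1)`. -/
lemma dimRatio_mono {N M : ℕ∞} (h : N ≤ M) {ε : ℝ} (hε : 0 < ε) (hε1 : ε < 1) :
    dimRatio N ε ≤ dimRatio M ε := by
  unfold dimRatio
  have hc : (0 : ℝ) ≤ (Real.log (1 / ε))⁻¹ := by
    have : 0 < Real.log (1 / ε) := Real.log_pos (one_lt_one_div hε hε1)
    positivity
  exact mul_le_mul_of_nonneg_right (elog_mono (by exact_mod_cast h))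
    (EReal.coe_nonneg.mpr hc)

/-- For every Borel probability measure `μ` on `ℝ^d` (with the `ℓ∞` metric)
and every `α > 0`, the lower Wasserstein dimension, the `α`-entropic dimension and the
`α`-upper Wasserstein dimension satisfy `d_*(μ) ≤ d̄_α(μ) ≤ d*_α(μ)`. -/
theorem lowerWDim_le_entropicDim_le_upperWDim
    (d : ℕ) (μ : Measure (Fin d → ℝ)) [IsProbabilityMeasure μ] (α : ℝ) (hα : 0 < α) :
    lowerWDim μ ≤ entropicDim μ α ∧ entropicDim μ α ≤ upperWDim μ α := by
  constructor
  · -- lowerWDim ≤ entropicDim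
    refine Filter.limsup_le_of_le (by isBoundedDefault) ?_
    filter_upwards [self_mem_nhdsWithin] with τ (hτ : (0 : ℝ) < τ)
    have hτα : (0 : ℝ) < τ ^ (1 / α) := Real.rpow_pos_of_pos hτ _
    have hev : ∀ᶠ ε in 𝓝[>] (0 : ℝ), ε ∈ Set.Ioo 0 (min 1 (τ ^ (1 / α))) :=
      Ioo_mem_nhdsGT_of_mem ⟨le_refl _, lt_min one_pos hτα⟩
    calc liminf (fun ε : ℝ => dimRatio (measCoverN μ ε τ) ε) (𝓝[>] (0 : ℝ))
        ≤ liminf (fun ε : ℝ => dimRatio (measCoverN μ ε (ε ^ α)) ε) (𝓝[>] (0 : ℝ)) := by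
          refine liminf_le_liminf ?_ (by isBoundedDefault) (by isBoundedDefault)
          filter_upwards [hev] with ε hε
          obtain ⟨hε0, hεm⟩ := hε
          have hε1 : ε < 1 := lt_of_lt_of_le hεm (min_le_left _ _)
          have hετ : ε ^ α ≤ τ := by
            have h1 : ε ^ α ≤ (τ ^ (1 / α)) ^ α :=
              Real.rpow_le_rpow hε0.le (le_of_lt (lt_of_lt_of_le hεm (min_le_right _ _))) hα.le
            rwa [← Real.rpow_mul hτ.le, one_div, inv_mul_cancel₀ hα.ne',
              Real.rpow_one] at h1
          exact dimRatio_mono (measCoverN_anti μ ε hετ) hε0 hε1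
      _ ≤ limsup (fun ε : ℝ => dimRatio (measCoverN μ ε (ε ^ α)) ε) (𝓝[>] (0 : ℝ)) :=
          liminf_le_limsup
  · -- entropicDim ≤ upperWDim
    apply le_sInf
    rintro x ⟨s, rfl, hs, hlim⟩
    refine le_trans ?_ hlim
    refine limsup_le_limsup ?_ (by isBoundedDefault) (by isBoundedDefault)
    have hev : ∀ᶠ ε in 𝓝[>] (0 : ℝ), ε ∈ Set.Ioo (0 : ℝ) 1 :=
      Ioo_mem_nhdsGT_of_mem ⟨le_refl _, one_pos⟩
    filter_upwards [hev] with ε hε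
    obtain ⟨hε0, hε1⟩ := hε
    have hden : (0 : ℝ) < s - 2 * α := by linarith
    have hexp : α ≤ s * α / (s - 2 * α) := by
      rw [le_div_iff₀ hden]; nlinarith
    have hετ : ε ^ (s * α / (s - 2 * α)) ≤ ε ^ α :=
      Real.rpow_le_rpow_of_exponent_ge hε0 hε1.le hexp
    exact dimRatio_mono (measCoverN_anti μ ε hετ) hε0 hε1
end

section
/- Let μ be a Borel probability measure on ℝ^d, ν a Borel probability measure on ℝ^ℓ, and let Ẽ: ℝ^d → ℝ^ℓ and D̃: ℝ^ℓ → ℝ^d be Borel measurable maps (in the paper, Hölder continuous). If the law of (X, Ẽ(X)) with X ∼ μ equals the law of (D̃(Z), Z) with Z ∼ ν, then D̃(Ẽ(x)) = x for μ-almost every x ∈ ℝ^d, and Ẽ(D̃(z)) = z for ν-almost every z ∈ ℝ^ℓ. -/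
open Filter Topology MeasureTheory Set
open scoped ENNReal NNReal

open Filter Topology MeasureTheory Set
open scoped ENNReal

/-- If the law of `(X, Ẽ(X))` with `X ∼ μ` equals the law of `(D̃(Z), Z)`
with `Z ∼ ν`, then `D̃ ∘ Ẽ = id` μ-a.e. and `Ẽ ∘ D̃ = id` ν-a.e. -/
theorem encoder_decoder_ae_inverse
    (d l : ℕ) (μ : Measure (Fin d → ℝ)) (ν : Measure (Fin l → ℝ))
    [IsProbabilityMeasure μ] [IsProbabilityMeasure ν]
    (E : (Fin d → ℝ) → (Fin l → ℝ)) (D : (Fin l → ℝ) → (Fin d → ℝ))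
    (hE : Measurable E) (hD : Measurable D)
    (h : μ.map (fun x => (x, E x)) = ν.map (fun z => (D z, z))) :
    (∀ᵐ x ∂μ, D (E x) = x) ∧ (∀ᵐ z ∂ν, E (D z) = z) := by
  have hg1 : Measurable (fun x : Fin d → ℝ => (x, E x)) := measurable_id.prodMk hE
  have hg2 : Measurable (fun z : Fin l → ℝ => (D z, z)) := hD.prodMk measurable_id
  constructor
  · -- use the set A = {p | D p.2 = p.1}
    have hA : MeasurableSet {p : (Fin d → ℝ) × (Fin l → ℝ) | D p.2 = p.1} :=
      measurableSet_eq_fun (hD.comp measurable_snd) measurable_fst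
    have h1 : μ.map (fun x => (x, E x)) {p | D p.2 = p.1}
        = μ {x | D (E x) = x} := by
      rw [Measure.map_apply hg1 hA]; rfl
    have h2 : ν.map (fun z => (D z, z)) {p | D p.2 = p.1} = 1 := by
      rw [Measure.map_apply hg2 hA]
      have : (fun z : Fin l → ℝ => (D z, z)) ⁻¹' {p | D p.2 = p.1} = univ := by
        ext z; simp
      rw [this]; simp
    have : μ {x | D (E x) = x} = 1 := by rw [← h1, h, h2]
    rw [ae_iff]
    have hms : MeasurableSet {x | D (E x) = x} := measurableSet_eq_fun (hD.comp hE) measurable_id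
    have := prob_compl_eq_zero_iff (μ := μ) hms |>.2 this
    convert this using 2
    rfl
  · have hB : MeasurableSet {p : (Fin d → ℝ) × (Fin l → ℝ) | E p.1 = p.2} :=
      measurableSet_eq_fun (hE.comp measurable_fst) measurable_snd
    have h1 : ν.map (fun z => (D z, z)) {p | E p.1 = p.2}
        = ν {z | E (D z) = z} := by
      rw [Measure.map_apply hg2 hB]; rfl
    have h2 : μ.map (fun x => (x, E x)) {p | E p.1 = p.2} = 1 := by
      rw [Measure.map_apply hg1 hB]
      have : (fun x : Fin d → ℝ => (x, E x)) ⁻¹' {p | E p.1 = p.2} = univ := by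
        ext x; simp
      rw [this]; simp
    have : ν {z | E (D z) = z} = 1 := by rw [← h1, ← h, h2]
    rw [ae_iff]
    have hms : MeasurableSet {z | E (D z) = z} := measurableSet_eq_fun (hE.comp hD) measurable_id
    have := prob_compl_eq_zero_iff (μ := ν) hms |>.2 this
    convert this using 2
    rfl
end

section
/- Let β > 0 and Ψ = H^β(ℝ^{d+ℓ}, ℝ, 1). Let μ and μ′ be Borel probability measures on [0,1]^d, let ν and ν′ be Borel probability measures on [0,1]^ℓ, let ℰ be a nonempty class of Borel measurable maps ℝ^d → ℝ^ℓ, and 𝒟 a nonempty class of Borel measurable maps ℝ^ℓ → ℝ^d. For a probability measure P on ℝ^d and E ∈ ℰ, write (P, E_♯P) for the law of (X, E(X)) with X ∼ P; for a probability measure Q on ℝ^ℓ and D ∈ 𝒟, write (D_♯Q, Q) for the law of (D(Z), Z) with Z ∼ Q. Set F₁ = { x ↦ ψ(x, E(x)) : ψ ∈ Ψ, E ∈ ℰ } and F₂ = { z ↦ ψ(D(z), z) : ψ ∈ Ψ, D ∈ 𝒟 }. (i) If (D̂, Ê) ∈ 𝒟 × ℰ attains the minimum of (D, E) ↦ ‖(μ′,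 E_♯μ′) − (D_♯ν, ν)‖_Ψ, then ‖(μ, Ê_♯μ) − (D̂_♯ν, ν)‖_Ψ ≤ inf_{D ∈ 𝒟, E ∈ ℰ} ‖(μ, E_♯μ) − (D_♯ν, ν)‖_Ψ + 2‖μ′ − μ‖_{F₁}. (ii) If (D̂, Ê) ∈ 𝒟 × ℰ attains the minimum of (D, E) ↦ ‖(μ′, E_♯μ′) − (D_♯ν′, ν′)‖_Ψ, then ‖(μ, Ê_♯μ) − (D̂_♯ν, ν)‖_Ψ ≤ inf_{D ∈ 𝒟, E ∈ ℰ} ‖(μ, E_♯μ) − (D_♯ν, ν)‖_Ψ + 2‖μ′ − μ‖_{F₁} + 2‖ν′ − ν‖_{F₂}. (In the paper, μ′ and ν′ are the empirical measures μ̂_n and ν̂_m.) -/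
open Filter Topology MeasureTheory Set
open scoped ENNReal NNReal

open Filter Topology MeasureTheory Set
open scoped ENNReal

/-- The joint law of `(X, E(X))` with `X ∼ P`, as a measure on `ℝ^{d+l}` (coordinates
appended). -/
noncomputable def jointXE {d l : ℕ} (P : Measure (Fin d → ℝ))
    (E : (Fin d → ℝ) → (Fin l → ℝ)) : Measure (Fin (d + l) → ℝ) :=
  P.map (fun x => Fin.append x (E x))

/-- The joint law of `(D(Z), Z)` with `Z ∼ Q`, as a measure on `ℝ^{d+l}` (coordinates
appended). -/
noncomputable def jointDZ {d l : ℕ} (Q : Measure (Fin l → ℝ))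
    (D : (Fin l → ℝ) → (Fin d → ℝ)) : Measure (Fin (d + l) → ℝ) :=
  Q.map (fun z => Fin.append (D z) z)


section AuxBigan

open Filter Topology MeasureTheory Set
open scoped ENNReal NNReal

lemma aux_mpderiv_zero {n : ℕ} (f : (Fin n → ℝ) → ℝ) : mpderiv 0 f = f := by
  unfold mpderiv
  induction List.finRange n with
  | nil => rfl
  | cons a L ih => simpa using ih

lemma aux_holder_bound {n : ℕ} {β : ℝ} {ψ : (Fin n → ℝ) → ℝ}
    (hψ : ψ ∈ HolderClass n β 1) (x : Fin n → ℝ) : |ψ x| ≤ 1 := by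
  set A : {s : Fin n → ℕ // ∑ i, s i ≤ ⌊β⌋₊} → ℝ≥0∞ :=
    fun s => ⨆ y : Fin n → ℝ, (‖mpderiv s.1 ψ y‖₊ : ℝ≥0∞) with hA
  have h0 : (‖ψ x‖₊ : ℝ≥0∞) ≤ A ⟨0, by simp⟩ := by
    rw [hA]
    simp only [aux_mpderiv_zero]
    exact le_iSup (fun y => (‖ψ y‖₊ : ℝ≥0∞)) x
  have h1 : A ⟨0, by simp⟩ ≤ ∑' s, A s := ENNReal.le_tsum _
  have h2 : ∑' s, A s ≤ holderNorm β ψ := le_self_add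
  have h3 : holderNorm β ψ ≤ 1 := by simpa using hψ.2
  have h4 : (‖ψ x‖₊ : ℝ≥0∞) ≤ 1 := le_trans h0 (le_trans h1 (le_trans h2 h3))
  rw [ENNReal.coe_le_one_iff] at h4
  rw [← Real.norm_eq_abs]
  exact_mod_cast h4

lemma aux_holder_cont {n : ℕ} {β : ℝ} {ψ : (Fin n → ℝ) → ℝ}
    (hψ : ψ ∈ HolderClass n β 1) : Continuous ψ := hψ.1.continuous

lemma aux_measurable_appendXE {d l : ℕ} {E : (Fin d → ℝ) → (Fin l → ℝ)} (hE : Measurable E) :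
    Measurable (fun x => Fin.append x (E x)) := by
  apply measurable_pi_iff.mpr
  intro j
  refine Fin.addCases (fun i => ?_) (fun i => ?_) j
  · simpa using measurable_pi_apply i
  · simpa [Function.comp_def] using (measurable_pi_apply i).comp hE

lemma aux_measurable_appendDZ {d l : ℕ} {D : (Fin l → ℝ) → (Fin d → ℝ)} (hD : Measurable D) :
    Measurable (fun z => Fin.append (D z) z) := by
  apply measurable_pi_iff.mpr
  intro j
  refine Fin.addCases (fun i => ?_) (fun i => ?_) j
  · simpa [Function.comp_def] using (measurable_pi_apply i).comp hD
  · simpa using measurable_pi_apply i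

variable {X : Type*} [MeasurableSpace X]

lemma aux_absdiff_le_two (P Q : MeasureTheory.Measure X)
    [IsProbabilityMeasure P] [IsProbabilityMeasure Q] {f : X → ℝ} (hf : ∀ x, |f x| ≤ 1) :
    |∫ x, f x ∂P - ∫ x, f x ∂Q| ≤ 2 := by
  have h1 : ‖∫ x, f x ∂P‖ ≤ 1 := by
    have := norm_integral_le_of_norm_le_const (μ := P) (f := f) (C := 1)
      (Filter.Eventually.of_forall fun x => by simpa using hf x)
    simpa using this
  have h2 : ‖∫ x, f x ∂Q‖ ≤ 1 := by
    have := norm_integral_le_of_norm_le_const (μ := Q) (f := f) (C := 1)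
      (Filter.Eventually.of_forall fun x => by simpa using hf x)
    simpa using this
  rw [Real.norm_eq_abs] at h1 h2
  have h1' := abs_le.mp h1
  have h2' := abs_le.mp h2
  exact abs_le.mpr ⟨by linarith [h1'.1, h2'.2], by linarith [h1'.2, h2'.1]⟩

lemma aux_ipm_nonneg (F : Set (X → ℝ)) (P Q : MeasureTheory.Measure X) : 0 ≤ ipm F P Q :=
  Real.iSup_nonneg fun _ => abs_nonneg _

lemma aux_le_ipm {F : Set (X → ℝ)} {P Q : MeasureTheory.Measure X}
    [IsProbabilityMeasure P] [IsProbabilityMeasure Q]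
    (hb : ∀ f ∈ F, ∀ x, |f x| ≤ 1) {f : X → ℝ} (hf : f ∈ F) :
    |∫ x, f x ∂P - ∫ x, f x ∂Q| ≤ ipm F P Q := by
  have hba : BddAbove (Set.range fun g : F => |∫ x, g.1 x ∂P - ∫ x, g.1 x ∂Q|) := by
    refine ⟨2, ?_⟩
    rintro r ⟨g, rfl⟩
    exact aux_absdiff_le_two P Q (hb g.1 g.2)
  exact le_ciSup hba ⟨f, hf⟩

lemma aux_ipm_comm (F : Set (X → ℝ)) (P Q : MeasureTheory.Measure X) :
    ipm F P Q = ipm F Q P := by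
  unfold ipm
  congr 1
  funext f
  rw [abs_sub_comm]

lemma aux_ipm_self (F : Set (X → ℝ)) (P : MeasureTheory.Measure X) : ipm F P P = 0 := by
  unfold ipm
  simp [Real.iSup_const_zero]

lemma aux_integral_jointXE {d l : ℕ} (P : MeasureTheory.Measure (Fin d → ℝ))
    {E : (Fin d → ℝ) → (Fin l → ℝ)} (hE : Measurable E)
    {ψ : (Fin (d + l) → ℝ) → ℝ} (hψ : Continuous ψ) :
    ∫ y, ψ y ∂(jointXE P E) = ∫ x, ψ (Fin.append x (E x)) ∂P := by
  unfold jointXE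
  exact integral_map (aux_measurable_appendXE hE).aemeasurable hψ.aestronglyMeasurable

lemma aux_integral_jointDZ {d l : ℕ} (Q : MeasureTheory.Measure (Fin l → ℝ))
    {D : (Fin l → ℝ) → (Fin d → ℝ)} (hD : Measurable D)
    {ψ : (Fin (d + l) → ℝ) → ℝ} (hψ : Continuous ψ) :
    ∫ y, ψ y ∂(jointDZ Q D) = ∫ z, ψ (Fin.append (D z) z) ∂Q := by
  unfold jointDZ
  exact integral_map (aux_measurable_appendDZ hD).aemeasurable hψ.aestronglyMeasurable

lemma aux_key {d l : ℕ} {β : ℝ}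
    (ℰ : Set ((Fin d → ℝ) → (Fin l → ℝ))) (hℰm : ∀ E ∈ ℰ, Measurable E)
    (𝒟 : Set ((Fin l → ℝ) → (Fin d → ℝ))) (h𝒟m : ∀ D ∈ 𝒟, Measurable D)
    (P P' : MeasureTheory.Measure (Fin d → ℝ)) (Q Q' : MeasureTheory.Measure (Fin l → ℝ))
    [IsProbabilityMeasure P] [IsProbabilityMeasure P']
    [IsProbabilityMeasure Q] [IsProbabilityMeasure Q']
    {E : (Fin d → ℝ) → (Fin l → ℝ)} (hE : E ∈ ℰ)
    {D : (Fin l → ℝ) → (Fin d → ℝ)} (hD : D ∈ 𝒟) :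
    ipm (HolderClass (d + l) β 1) (jointXE P E) (jointDZ Q D) ≤
      ipm (HolderClass (d + l) β 1) (jointXE P' E) (jointDZ Q' D) +
      ipm {h : (Fin d → ℝ) → ℝ |
          ∃ ψ ∈ HolderClass (d + l) β 1, ∃ E ∈ ℰ, h = fun x => ψ (Fin.append x (E x))} P' P +
      ipm {h : (Fin l → ℝ) → ℝ |
          ∃ ψ ∈ HolderClass (d + l) β 1, ∃ D ∈ 𝒟, h = fun z => ψ (Fin.append (D z) z)} Q' Q := by
  have hEm := hℰm E hE
  have hDm := h𝒟m D hD
  haveI : IsProbabilityMeasure (jointXE P E) :=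
    Measure.isProbabilityMeasure_map (aux_measurable_appendXE hEm).aemeasurable
  haveI : IsProbabilityMeasure (jointXE P' E) :=
    Measure.isProbabilityMeasure_map (aux_measurable_appendXE hEm).aemeasurable
  haveI : IsProbabilityMeasure (jointDZ Q D) :=
    Measure.isProbabilityMeasure_map (aux_measurable_appendDZ hDm).aemeasurable
  haveI : IsProbabilityMeasure (jointDZ Q' D) :=
    Measure.isProbabilityMeasure_map (aux_measurable_appendDZ hDm).aemeasurable
  have hΨb : ∀ f ∈ HolderClass (d + l) β 1, ∀ x, |f x| ≤ 1 :=
    fun f hf x => aux_holder_bound hf x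
  have hF1b : ∀ f ∈ {h : (Fin d → ℝ) → ℝ |
      ∃ ψ ∈ HolderClass (d + l) β 1, ∃ E ∈ ℰ, h = fun x => ψ (Fin.append x (E x))},
      ∀ x, |f x| ≤ 1 := by
    rintro f ⟨ψ, hψ, E', hE', rfl⟩ x
    exact aux_holder_bound hψ _
  have hF2b : ∀ f ∈ {h : (Fin l → ℝ) → ℝ |
      ∃ ψ ∈ HolderClass (d + l) β 1, ∃ D ∈ 𝒟, h = fun z => ψ (Fin.append (D z) z)},
      ∀ x, |f x| ≤ 1 := by
    rintro f ⟨ψ, hψ, D', hD', rfl⟩ x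
    exact aux_holder_bound hψ _
  have key : ∀ ψ : (HolderClass (d + l) β 1),
      |∫ x, ψ.1 x ∂(jointXE P E) - ∫ x, ψ.1 x ∂(jointDZ Q D)| ≤
      ipm (HolderClass (d + l) β 1) (jointXE P' E) (jointDZ Q' D) +
      ipm {h : (Fin d → ℝ) → ℝ |
          ∃ ψ ∈ HolderClass (d + l) β 1, ∃ E ∈ ℰ, h = fun x => ψ (Fin.append x (E x))} P' P +
      ipm {h : (Fin l → ℝ) → ℝ |
          ∃ ψ ∈ HolderClass (d + l) β 1, ∃ D ∈ 𝒟, h = fun z => ψ (Fin.append (D z) z)} Q' Q := by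
    rintro ⟨ψ, hψ⟩
    have hc := aux_holder_cont hψ
    have e1 := aux_integral_jointXE P hEm hc
    have e2 := aux_integral_jointXE P' hEm hc
    have e3 := aux_integral_jointDZ Q hDm hc
    have e4 := aux_integral_jointDZ Q' hDm hc
    have hb1 : |∫ x, ψ (Fin.append x (E x)) ∂P' - ∫ x, ψ (Fin.append x (E x)) ∂P| ≤
        ipm {h : (Fin d → ℝ) → ℝ |
          ∃ ψ ∈ HolderClass (d + l) β 1, ∃ E ∈ ℰ, h = fun x => ψ (Fin.append x (E x))} P' P :=
      aux_le_ipm hF1b ⟨ψ, hψ, E, hE, rfl⟩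
    have hb2 : |∫ x, ψ x ∂(jointXE P' E) - ∫ x, ψ x ∂(jointDZ Q' D)| ≤
        ipm (HolderClass (d + l) β 1) (jointXE P' E) (jointDZ Q' D) :=
      aux_le_ipm hΨb hψ
    have hb3 : |∫ z, ψ (Fin.append (D z) z) ∂Q' - ∫ z, ψ (Fin.append (D z) z) ∂Q| ≤
        ipm {h : (Fin l → ℝ) → ℝ |
          ∃ ψ ∈ HolderClass (d + l) β 1, ∃ D ∈ 𝒟, h = fun z => ψ (Fin.append (D z) z)} Q' Q :=
      aux_le_ipm hF2b ⟨ψ, hψ, D, hD, rfl⟩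
    rw [e2, e4] at hb2
    simp only [e1, e3]
    have habs1 := abs_sub_le (∫ x, ψ (Fin.append x (E x)) ∂P)
      (∫ x, ψ (Fin.append x (E x)) ∂P') (∫ z, ψ (Fin.append (D z) z) ∂Q)
    have habs2 := abs_sub_le (∫ x, ψ (Fin.append x (E x)) ∂P')
      (∫ z, ψ (Fin.append (D z) z) ∂Q') (∫ z, ψ (Fin.append (D z) z) ∂Q)
    have hcomm1 := abs_sub_comm (∫ x, ψ (Fin.append x (E x)) ∂P)
      (∫ x, ψ (Fin.append x (E x)) ∂P')
    linarith
  refine Real.iSup_le key ?_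
  have n1 := aux_ipm_nonneg (HolderClass (d + l) β 1) (jointXE P' E) (jointDZ Q' D)
  have n2 := aux_ipm_nonneg {h : (Fin d → ℝ) → ℝ |
      ∃ ψ ∈ HolderClass (d + l) β 1, ∃ E ∈ ℰ, h = fun x => ψ (Fin.append x (E x))} P' P
  have n3 := aux_ipm_nonneg {h : (Fin l → ℝ) → ℝ |
      ∃ ψ ∈ HolderClass (d + l) β 1, ∃ D ∈ 𝒟, h = fun z => ψ (Fin.append (D z) z)} Q' Q
  linarith

end AuxBigan

/-- Oracle inequalities for BiGANs, with `Ψ = H^β(ℝ^{d+l}, ℝ, 1)`,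
`F₁ = {x ↦ ψ(x, E(x)) : ψ ∈ Ψ, E ∈ ℰ}` and `F₂ = {z ↦ ψ(D(z), z) : ψ ∈ Ψ, D ∈ 𝒟}`. -/
theorem bigan_oracle_inequalities
    (d l : ℕ) (β : ℝ) (hβ : 0 < β)
    (μ μ' : Measure (Fin d → ℝ)) (ν ν' : Measure (Fin l → ℝ))
    [IsProbabilityMeasure μ] [IsProbabilityMeasure μ']
    [IsProbabilityMeasure ν] [IsProbabilityMeasure ν']
    (hμ : μ (Set.Icc 0 1) = 1) (hμ' : μ' (Set.Icc 0 1) = 1)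
    (hν : ν (Set.Icc 0 1) = 1) (hν' : ν' (Set.Icc 0 1) = 1)
    (ℰ : Set ((Fin d → ℝ) → (Fin l → ℝ))) (hℰne : ℰ.Nonempty)
    (hℰm : ∀ E ∈ ℰ, Measurable E)
    (𝒟 : Set ((Fin l → ℝ) → (Fin d → ℝ))) (h𝒟ne : 𝒟.Nonempty)
    (h𝒟m : ∀ D ∈ 𝒟, Measurable D)
    (Dhat : (Fin l → ℝ) → (Fin d → ℝ)) (hDhat : Dhat ∈ 𝒟)
    (Ehat : (Fin d → ℝ) → (Fin l → ℝ)) (hEhat : Ehat ∈ ℰ) :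
    ((∀ D ∈ 𝒟, ∀ E ∈ ℰ,
        ipm (HolderClass (d + l) β 1) (jointXE μ' Ehat) (jointDZ ν Dhat) ≤
          ipm (HolderClass (d + l) β 1) (jointXE μ' E) (jointDZ ν D)) →
      ipm (HolderClass (d + l) β 1) (jointXE μ Ehat) (jointDZ ν Dhat) ≤
        (⨅ DE : 𝒟 × ℰ, ipm (HolderClass (d + l) β 1) (jointXE μ DE.2.1) (jointDZ ν DE.1.1)) +
          2 * ipm {h : (Fin d → ℝ) → ℝ |
              ∃ ψ ∈ HolderClass (d + l) β 1, ∃ E ∈ ℰ, h = fun x => ψ (Fin.append x (E x))}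
            μ' μ) ∧
    ((∀ D ∈ 𝒟, ∀ E ∈ ℰ,
        ipm (HolderClass (d + l) β 1) (jointXE μ' Ehat) (jointDZ ν' Dhat) ≤
          ipm (HolderClass (d + l) β 1) (jointXE μ' E) (jointDZ ν' D)) →
      ipm (HolderClass (d + l) β 1) (jointXE μ Ehat) (jointDZ ν Dhat) ≤
        (⨅ DE : 𝒟 × ℰ, ipm (HolderClass (d + l) β 1) (jointXE μ DE.2.1) (jointDZ ν DE.1.1)) +
          2 * ipm {h : (Fin d → ℝ) → ℝ |
              ∃ ψ ∈ HolderClass (d + l) β 1, ∃ E ∈ ℰ, h = fun x => ψ (Fin.append x (E x))}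
            μ' μ +
          2 * ipm {h : (Fin l → ℝ) → ℝ |
              ∃ ψ ∈ HolderClass (d + l) β 1, ∃ D ∈ 𝒟, h = fun z => ψ (Fin.append (D z) z)}
            ν' ν) := by
  haveI := hℰne.to_subtype
  haveI := h𝒟ne.to_subtype
  have hself2 : ipm {h : (Fin l → ℝ) → ℝ |
      ∃ ψ ∈ HolderClass (d + l) β 1, ∃ D ∈ 𝒟, h = fun z => ψ (Fin.append (D z) z)} ν ν = 0 :=
    aux_ipm_self _ _
  have hcomm1 : ipm {h : (Fin d → ℝ) → ℝ |
      ∃ ψ ∈ HolderClass (d + l) β 1, ∃ E ∈ ℰ, h = fun x => ψ (Fin.append x (E x))} μ μ' =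
      ipm {h : (Fin d → ℝ) → ℝ |
      ∃ ψ ∈ HolderClass (d + l) β 1, ∃ E ∈ ℰ, h = fun x => ψ (Fin.append x (E x))} μ' μ :=
    aux_ipm_comm _ _ _
  have hcomm2 : ipm {h : (Fin l → ℝ) → ℝ |
      ∃ ψ ∈ HolderClass (d + l) β 1, ∃ D ∈ 𝒟, h = fun z => ψ (Fin.append (D z) z)} ν ν' =
      ipm {h : (Fin l → ℝ) → ℝ |
      ∃ ψ ∈ HolderClass (d + l) β 1, ∃ D ∈ 𝒟, h = fun z => ψ (Fin.append (D z) z)} ν' ν :=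
    aux_ipm_comm _ _ _
  constructor
  · intro hopt
    have key : ∀ DE : 𝒟 × ℰ,
        ipm (HolderClass (d + l) β 1) (jointXE μ Ehat) (jointDZ ν Dhat) -
          2 * ipm {h : (Fin d → ℝ) → ℝ |
              ∃ ψ ∈ HolderClass (d + l) β 1, ∃ E ∈ ℰ, h = fun x => ψ (Fin.append x (E x))} μ' μ ≤
        ipm (HolderClass (d + l) β 1) (jointXE μ DE.2.1) (jointDZ ν DE.1.1) := by
      rintro ⟨D, E⟩
      have h1 := aux_key (β := β) ℰ hℰm 𝒟 h𝒟m μ μ' ν ν hEhat hDhat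
      have h2 := hopt D.1 D.2 E.1 E.2
      have h3 := aux_key (β := β) ℰ hℰm 𝒟 h𝒟m μ' μ ν ν E.2 D.2
      linarith
    have h4 := le_ciInf key
    linarith
  · intro hopt
    have key : ∀ DE : 𝒟 × ℰ,
        ipm (HolderClass (d + l) β 1) (jointXE μ Ehat) (jointDZ ν Dhat) -
          2 * ipm {h : (Fin d → ℝ) → ℝ |
              ∃ ψ ∈ HolderClass (d + l) β 1, ∃ E ∈ ℰ, h = fun x => ψ (Fin.append x (E x))} μ' μ -
          2 * ipm {h : (Fin l → ℝ) → ℝ |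
              ∃ ψ ∈ HolderClass (d + l) β 1, ∃ D ∈ 𝒟, h = fun z => ψ (Fin.append (D z) z)} ν' ν ≤
        ipm (HolderClass (d + l) β 1) (jointXE μ DE.2.1) (jointDZ ν DE.1.1) := by
      rintro ⟨D, E⟩
      have h1 := aux_key (β := β) ℰ hℰm 𝒟 h𝒟m μ μ' ν ν' hEhat hDhat
      have h2 := hopt D.1 D.2 E.1 E.2
      have h3 := aux_key (β := β) ℰ hℰm 𝒟 h𝒟m μ' μ ν' ν E.2 D.2
      linarith
    have h4 := le_ciInf key
    linarith
end

section
/- For every d ∈ ℕ and every real number d⋆ ∈ [0, d], there exists a Borel probability measure μ⋆ on [0,1]^d such that its lower Wasserstein dimension and the upper Minkowski dimension of its support both equal d⋆: d_*(μ⋆) = dim_M(μ⋆) = d⋆. -/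
open Filter Topology MeasureTheory Set
open scoped ENNReal NNReal

open Filter Topology MeasureTheory Set
open scoped ENNReal

namespace AuxWD


/-- binary digit `j` (0-indexed, weight `2^{-(j+1)}`) of a real number. -/
noncomputable def bit (j : ℕ) (t : ℝ) : ℤ := ⌊2 ^ (j + 1) * t⌋ - 2 * ⌊2 ^ j * t⌋

lemma bit_mem (j : ℕ) (t : ℝ) : bit j t = 0 ∨ bit j t = 1 := by
  have h1 : 2 * ⌊2 ^ j * t⌋ ≤ ⌊2 ^ (j + 1) * t⌋ := by
    apply Int.le_floor.2
    push_cast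
    rw [pow_succ]
    nlinarith [Int.floor_le (2 ^ j * t)]
  have h2 : ⌊2 ^ (j + 1) * t⌋ < 2 * ⌊2 ^ j * t⌋ + 2 := by
    apply Int.floor_lt.2
    push_cast
    rw [pow_succ]
    nlinarith [Int.lt_floor_add_one (2 ^ j * t)]
  unfold bit; omega

lemma bit_nonneg (j : ℕ) (t : ℝ) : (0:ℤ) ≤ bit j t := by rcases bit_mem j t with h | h <;> omega
lemma bit_le_one (j : ℕ) (t : ℝ) : bit j t ≤ 1 := by rcases bit_mem j t with h | h <;> omega

/-- telescoping: partial binary sums recover the floor. -/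
lemma sum_bit (M : ℕ) (t : ℝ) :
    ∑ j ∈ Finset.range M, (bit j t : ℝ) / 2 ^ (j + 1) = (⌊2 ^ M * t⌋ : ℝ) / 2 ^ M - ⌊t⌋ := by
  induction M with
  | zero => simp
  | succ M ih =>
    rw [Finset.sum_range_succ, ih]
    unfold bit
    push_cast
    field_simp
    ring

/-- if `2^j * t` is an integer then all bits from `j` on vanish. -/
lemma bit_eq_zero_of_int (j : ℕ) (t : ℝ) (k : ℕ) (hj : j ≤ k) (z : ℤ) (hz : 2 ^ j * t = z) :
    bit k t = 0 := by
  obtain ⟨m, rfl⟩ := Nat.exists_eq_add_of_le hj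
  have h1 : 2 ^ (j + m) * t = ((2 ^ m * z : ℤ) : ℝ) := by
    have e : (2:ℝ) ^ (j + m) * t = 2 ^ m * (2 ^ j * t) := by rw [pow_add]; ring
    rw [e, hz]; push_cast; ring
  have h2 : 2 ^ (j + m + 1) * t = ((2 ^ (m + 1) * z : ℤ) : ℝ) := by
    have e : (2:ℝ) ^ (j + m + 1) * t = 2 ^ (m + 1) * (2 ^ j * t) := by rw [pow_add, pow_add]; ring
    rw [e, hz]; push_cast; ring
  unfold bit
  rw [h1, h2, Int.floor_intCast, Int.floor_intCast]
  ring

lemma geom_helper (n : ℕ) : ∑ k ∈ Finset.range n, (1 : ℝ) / 2 ^ (k + 1 + 1) = (1 - (1/2)^n) / 2 := by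
  induction n with
  | zero => simp
  | succ m ihm => rw [Finset.sum_range_succ, ihm]; simp only [one_div, inv_pow, pow_succ]; ring

/-- uniqueness of finite binary expansions. -/
lemma bin_unique : ∀ (n : ℕ) (a b : ℕ → ℤ), (∀ k < n, a k = 0 ∨ a k = 1) →
    (∀ k < n, b k = 0 ∨ b k = 1) →
    (∑ k ∈ Finset.range n, (a k : ℝ) / 2 ^ (k + 1)) = ∑ k ∈ Finset.range n, (b k : ℝ) / 2 ^ (k + 1) →
    ∀ k < n, a k = b k := by
  intro n
  induction n with
  | zero => intro a b _ _ _ k hk; omega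
  | succ n ih =>
    intro a b ha hb hsum
    -- bounds for the shifted tails
    have key : ∀ (c : ℕ → ℤ), (∀ k < n + 1, c k = 0 ∨ c k = 1) →
        0 ≤ ∑ k ∈ Finset.range n, (c (k + 1) : ℝ) / 2 ^ (k + 1 + 1) ∧
        ∑ k ∈ Finset.range n, (c (k + 1) : ℝ) / 2 ^ (k + 1 + 1) < 1 / 2 := by
      intro c hc
      constructor
      · apply Finset.sum_nonneg
        intro k hk
        have := hc (k + 1) (by simpa using Nat.succ_lt_succ (Finset.mem_range.1 hk))
        rcases this with h | h <;> rw [h] <;> positivity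
      · calc ∑ k ∈ Finset.range n, (c (k + 1) : ℝ) / 2 ^ (k + 1 + 1)
            ≤ ∑ k ∈ Finset.range n, (1 : ℝ) / 2 ^ (k + 1 + 1) := by
              apply Finset.sum_le_sum
              intro k hk
              have := hc (k + 1) (by simpa using Nat.succ_lt_succ (Finset.mem_range.1 hk))
              rcases this with h | h <;> rw [h] <;> norm_num
          _ < 1 / 2 := by
              rw [geom_helper]
              have : (0:ℝ) < (1/2)^n := by positivity
              linarith
    have hsum' : (a 0 : ℝ) / 2 + ∑ k ∈ Finset.range n, (a (k+1) : ℝ) / 2 ^ (k + 1 + 1)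
        = (b 0 : ℝ) / 2 + ∑ k ∈ Finset.range n, (b (k+1) : ℝ) / 2 ^ (k + 1 + 1) := by
      have ea := Finset.sum_range_succ' (fun k => (a k : ℝ) / 2 ^ (k + 1)) n
      have eb := Finset.sum_range_succ' (fun k => (b k : ℝ) / 2 ^ (k + 1)) n
      simp only [zero_add, pow_one] at ea eb
      rw [ea, eb] at hsum
      linarith [hsum]
    obtain ⟨ha0, ha1⟩ := key a ha
    obtain ⟨hb0, hb1⟩ := key b hb
    have h0 : a 0 = b 0 := by
      have : |(a 0 : ℝ) - b 0| < 1 := by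
        rw [abs_sub_lt_iff]; constructor <;> nlinarith
      have h2 : |a 0 - b 0| < 1 := by exact_mod_cast (by push_cast; exact this : |((a 0 - b 0 : ℤ) : ℝ)| < 1)
      have := abs_lt.mp h2
      omega
    have htail : (∑ k ∈ Finset.range n, (a (k+1) : ℝ) / 2 ^ (k + 1))
        = ∑ k ∈ Finset.range n, (b (k+1) : ℝ) / 2 ^ (k + 1) := by
      have h2 : (∑ k ∈ Finset.range n, (a (k+1) : ℝ) / 2 ^ (k + 1 + 1))
          = ∑ k ∈ Finset.range n, (b (k+1) : ℝ) / 2 ^ (k + 1 + 1) := by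
        rw [h0] at hsum'; linarith
      have e : ∀ (c : ℕ → ℤ), ∑ k ∈ Finset.range n, (c (k+1) : ℝ) / 2 ^ (k + 1)
          = 2 * ∑ k ∈ Finset.range n, (c (k+1) : ℝ) / 2 ^ (k + 1 + 1) := by
        intro c
        rw [Finset.mul_sum]
        apply Finset.sum_congr rfl
        intro k _
        rw [pow_succ]
        ring
      rw [e a, e b, h2]
    have := ih (fun k => a (k+1)) (fun k => b (k+1))
      (fun k hk => ha (k+1) (by omega)) (fun k hk => hb (k+1) (by omega)) htail
    intro k hk
    rcases Nat.eq_zero_or_pos k with rfl | hkpos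
    · exact h0
    · obtain ⟨m, rfl⟩ : ∃ m, k = m + 1 := ⟨k - 1, by omega⟩
      exact this m (by omega)

/-- floor of a quotient by a positive integer. -/
lemma floor_div_int (y : ℝ) (c : ℤ) (hc : 0 < c) : ⌊y / c⌋ = ⌊y⌋ / c := by
  have hc' : (0:ℝ) < c := by exact_mod_cast hc
  have h1 : (⌊y⌋ / c) * c ≤ ⌊y⌋ := Int.ediv_mul_le ⌊y⌋ (by omega)
  have h2 : ⌊y⌋ < (⌊y⌋ / c + 1) * c := Int.lt_ediv_add_one_mul_self ⌊y⌋ hc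
  apply Int.floor_eq_iff.2
  constructor
  · rw [le_div_iff₀ hc']
    calc ((⌊y⌋ / c : ℤ) : ℝ) * c = ((⌊y⌋ / c * c : ℤ) : ℝ) := by push_cast; ring
    _ ≤ (⌊y⌋ : ℝ) := by exact_mod_cast h1
    _ ≤ y := Int.floor_le y
  · rw [div_lt_iff₀ hc']
    calc y < (⌊y⌋ : ℝ) + 1 := Int.lt_floor_add_one y
    _ ≤ (((⌊y⌋ / c + 1) * c : ℤ) : ℝ) := by exact_mod_cast h2
    _ = (((⌊y⌋ / c : ℤ) : ℝ) + 1) * c := by push_cast; ring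

/-- the floor at scale `2^M` determines all bits below `M`. -/
lemma bits_of_floor (M : ℕ) (t t' : ℝ) (h : ⌊2 ^ M * t⌋ = ⌊2 ^ M * t'⌋) :
    ∀ j < M, bit j t = bit j t' := by
  have key : ∀ j ≤ M, ⌊2 ^ j * t⌋ = ⌊2 ^ j * t'⌋ := by
    intro j hj
    have e : ∀ u : ℝ, 2 ^ j * u = (2 ^ M * u) / ((2 ^ (M - j) : ℤ) : ℝ) := by
      intro u
      have hp : ((2 ^ (M - j) : ℤ) : ℝ) = 2 ^ (M - j) := by push_cast; ring
      have hM : (2:ℝ) ^ M = 2 ^ j * 2 ^ (M - j) := by rw [← pow_add]; congr 1; omega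
      rw [hp, eq_div_iff (by positivity), hM]
      ring
    rw [e t, e t', floor_div_int _ _ (by positivity), floor_div_int _ _ (by positivity), h]
  intro j hj
  unfold bit
  rw [key j (by omega), key (j+1) (by omega)]



/-! ### The digit schedule -/

noncomputable def mf (s : ℝ) (n : ℕ) : ℕ := ⌊s * n⌋₊

lemma mf_zero (s : ℝ) : mf s 0 = 0 := by simp [mf]

lemma mf_mono {s : ℝ} (hs : 0 ≤ s) : Monotone (mf s) := by
  intro a b hab
  have : (a:ℝ) ≤ b := by exact_mod_cast hab
  exact Nat.floor_mono (by nlinarith)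

lemma mf_le {s : ℝ} (hs : 0 ≤ s) (n : ℕ) : (mf s n : ℝ) ≤ s * n :=
  Nat.floor_le (by positivity)

lemma mf_gt (s : ℝ) (n : ℕ) : s * n - 1 < mf s n := by
  have := Nat.lt_floor_add_one (s * n)
  simp only [mf]; linarith

noncomputable def df (s : ℝ) (n : ℕ) : ℕ := mf s n - mf s (n - 1)

lemma df_le {d : ℕ} {s : ℝ} (hs : 0 ≤ s) (hsd : s ≤ d) (k : ℕ) : df s (k + 1) ≤ d := by
  have h1 : (mf s (k+1) : ℝ) ≤ s * ((k:ℕ)+1 : ℕ) := mf_le hs (k+1)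
  push_cast at h1
  have h2 : s * k - 1 < mf s k := mf_gt s k
  have : (mf s (k+1) : ℝ) < mf s k + d + 1 := by push_cast; nlinarith
  have : mf s (k+1) ≤ mf s k + d := by exact_mod_cast Nat.lt_add_one_iff.1 (by exact_mod_cast this)
  simp only [df, Nat.add_sub_cancel]
  omega

lemma index_lt {s : ℝ} (hs : 0 ≤ s) {k n i : ℕ} (hk : k < n) (hi : i < df s (k + 1)) :
    mf s k + i < mf s n := by
  have h1 : mf s (k+1) ≤ mf s n := mf_mono hs hk
  simp only [df, Nat.add_sub_cancel] at hi
  omega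

lemma decomp {d : ℕ} {s : ℝ} (hs : 0 ≤ s) (hsd : s ≤ d) {n j : ℕ} (hj : j < mf s n) :
    ∃ k < n, ∃ i, i < df s (k + 1) ∧ i < d ∧ j = mf s k + i := by
  have hex : ∃ k, j < mf s (k + 1) := by
    rcases n with _ | n
    · simp [mf_zero] at hj
    · exact ⟨n, hj⟩
  classical
  let k := Nat.find hex
  have hk1 : j < mf s (k + 1) := Nat.find_spec hex
  have hk0 : mf s k ≤ j := by
    rcases Nat.eq_zero_or_pos k with hk | hk
    · rw [hk, mf_zero]; omega
    · have := Nat.find_min hex (m := k - 1) (by omega)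
      have he : k - 1 + 1 = k := by omega
      rw [he] at this
      omega
  have hkn : k < n := by
    by_contra hc
    have : mf s n ≤ mf s k := mf_mono hs (by omega)
    omega
  have hidf : j - mf s k < df s (k + 1) := by
    simp only [df, Nat.add_sub_cancel]; omega
  refine ⟨k, hkn, j - mf s k, hidf, ?_, by omega⟩
  calc j - mf s k < df s (k+1) := hidf
  _ ≤ d := df_le hs hsd k

/-! ### The map into the cube -/

noncomputable def cornerOfW (d : ℕ) (s : ℝ) (n : ℕ) (w : ℕ → ℤ) : Fin d → ℝ := fun i =>
  ∑ k ∈ Finset.range n, (if (i : ℕ) < df s (k + 1) then (w (mf s k + i) : ℝ) else 0) / 2 ^ (k + 1)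

noncomputable def cterm (d : ℕ) (s : ℝ) (t : ℝ) (i : Fin d) (k : ℕ) : ℝ :=
  (if (i : ℕ) < df s (k + 1) then (bit (mf s k + i) t : ℝ) else 0) / 2 ^ (k + 1)

noncomputable def cmap (d : ℕ) (s : ℝ) (t : ℝ) : Fin d → ℝ := fun i => ∑' k, cterm d s t i k

noncomputable def corner (d : ℕ) (s : ℝ) (n : ℕ) (t : ℝ) : Fin d → ℝ :=
  cornerOfW d s n (fun j => bit j t)

lemma corner_eq_sum (d : ℕ) (s : ℝ) (n : ℕ) (t : ℝ) (i : Fin d) :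
    corner d s n t i = ∑ k ∈ Finset.range n, cterm d s t i k := rfl

lemma cterm_nonneg (d : ℕ) (s : ℝ) (t : ℝ) (i : Fin d) (k : ℕ) : 0 ≤ cterm d s t i k := by
  unfold cterm
  have h := bit_nonneg (mf s k + i) t
  have h' : (0:ℝ) ≤ (bit (mf s k + i) t : ℝ) := by exact_mod_cast h
  split
  · positivity
  · positivity

lemma cterm_le (d : ℕ) (s : ℝ) (t : ℝ) (i : Fin d) (k : ℕ) : cterm d s t i k ≤ 1 / 2 ^ (k + 1) := by
  unfold cterm
  have h1 := bit_le_one (mf s k + i) t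
  have : (if (i : ℕ) < df s (k + 1) then (bit (mf s k + i) t : ℝ) else 0) ≤ 1 := by
    split
    · exact_mod_cast h1
    · norm_num
  gcongr


lemma summable_pow_half : Summable (fun k : ℕ => (1:ℝ) / 2 ^ (k + 1)) := by
  have : (fun k : ℕ => (1:ℝ) / 2 ^ (k + 1)) = fun k => (1/2 : ℝ) * (1/2)^k := by
    funext k; simp only [one_div, pow_succ, mul_inv, inv_pow]; ring
  rw [this]
  exact (summable_geometric_of_lt_one (by norm_num) (by norm_num)).mul_left _

lemma summable_cterm (d : ℕ) (s : ℝ) (t : ℝ) (i : Fin d) : Summable (cterm d s t i) :=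
  Summable.of_nonneg_of_le (cterm_nonneg d s t i) (cterm_le d s t i) summable_pow_half

lemma tsum_pow_half : ∑' k : ℕ, (1:ℝ) / 2 ^ (k + 1) = 1 := by
  have : (fun k : ℕ => (1:ℝ) / 2 ^ (k + 1)) = fun k => (1/2 : ℝ) * (1/2)^k := by
    funext k; simp only [one_div, pow_succ, mul_inv, inv_pow]; ring
  rw [this, tsum_mul_left, tsum_geometric_of_lt_one (by norm_num) (by norm_num)]
  norm_num

lemma corner_le_cmap (d : ℕ) (s : ℝ) (n : ℕ) (t : ℝ) (i : Fin d) :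
    corner d s n t i ≤ cmap d s t i ∧ cmap d s t i ≤ corner d s n t i + ((2:ℝ) ^ n)⁻¹ := by
  have hsum := summable_cterm d s t i
  have key := hsum.sum_add_tsum_nat_add n
  have htail0 : 0 ≤ ∑' k : ℕ, cterm d s t i (k + n) :=
    tsum_nonneg fun k => cterm_nonneg d s t i (k + n)
  have htail1 : ∑' k : ℕ, cterm d s t i (k + n) ≤ ((2:ℝ) ^ n)⁻¹ := by
    have hfun : ∀ k : ℕ, (1:ℝ) / 2 ^ (k + n + 1) = ((2:ℝ)^n)⁻¹ * (1 / 2^(k+1)) := by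
      intro k
      rw [pow_add, pow_add]
      field_simp
      ring
    have hsum2 : Summable (fun k : ℕ => (1:ℝ) / 2 ^ (k + n + 1)) := by
      simp_rw [hfun]
      exact summable_pow_half.mul_left _
    have hsum1 : Summable (fun k : ℕ => cterm d s t i (k + n)) :=
      hsum.comp_injective (add_left_injective n)
    have h1 : ∑' k : ℕ, cterm d s t i (k + n) ≤ ∑' k : ℕ, (1:ℝ) / 2 ^ (k + n + 1) :=
      Summable.tsum_le_tsum (fun k => cterm_le d s t i (k + n)) hsum1 hsum2
    have h2 : ∑' k : ℕ, (1:ℝ) / 2 ^ (k + n + 1) = ((2:ℝ)^n)⁻¹ := by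
      simp_rw [hfun]
      rw [tsum_mul_left, tsum_pow_half, mul_one]
    rw [← h2]
    exact h1
  unfold cmap
  rw [← key, corner_eq_sum]
  constructor <;> linarith

lemma dist_cmap_corner (d : ℕ) (s : ℝ) (n : ℕ) (t : ℝ) :
    dist (cmap d s t) (corner d s n t) ≤ ((2:ℝ) ^ n)⁻¹ := by
  apply (dist_pi_le_iff (by positivity)).2
  intro i
  rw [Real.dist_eq, abs_le]
  have h := corner_le_cmap d s n t i
  constructor <;> linarith [h.1, h.2]

lemma corner_congr (d : ℕ) {s : ℝ} (hs : 0 ≤ s) (n : ℕ) {t t' : ℝ}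
    (h : ∀ j < mf s n, bit j t = bit j t') : corner d s n t = corner d s n t' := by
  funext i
  unfold corner cornerOfW
  apply Finset.sum_congr rfl
  intro k hk
  congr 1
  beta_reduce
  split
  · next hi => rw [h _ (index_lt hs (Finset.mem_range.1 hk) hi)]
  · rfl

lemma corner_inj_bits {d : ℕ} {s : ℝ} (hs : 0 ≤ s) (hsd : s ≤ (d:ℝ)) (n : ℕ) {t t' : ℝ}
    (h : corner d s n t = corner d s n t') : ∀ j < mf s n, bit j t = bit j t' := by
  intro j hj
  obtain ⟨k, hk, i, hidf, hid, rfl⟩ := decomp hs hsd hj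
  have hcoord := congrFun h (⟨i, hid⟩ : Fin d)
  have key := bin_unique n (fun k' => if i < df s (k'+1) then bit (mf s k' + i) t else 0)
      (fun k' => if i < df s (k'+1) then bit (mf s k' + i) t' else 0)
      (fun k' _ => by
        by_cases hc : i < df s (k' + 1)
        · simpa [hc] using bit_mem (mf s k' + i) t
        · simp [hc])
      (fun k' _ => by
        by_cases hc : i < df s (k' + 1)
        · simpa [hc] using bit_mem (mf s k' + i) t'
        · simp [hc]) ?_ k hk
  · simpa [hidf] using key
  · unfold corner cornerOfW at hcoord
    simp only [apply_ite (fun z : ℤ => (z:ℝ)), Int.cast_zero] at hcoord ⊢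
    exact hcoord

lemma corner_dyadic (d : ℕ) (s : ℝ) (n : ℕ) (t : ℝ) (i : Fin d) :
    ∃ z : ℤ, corner d s n t i = (z : ℝ) / 2 ^ n := by
  refine ⟨∑ k ∈ Finset.range n, (if (i:ℕ) < df s (k+1) then bit (mf s k + i) t else 0) * 2 ^ (n - (k+1)), ?_⟩
  unfold corner cornerOfW
  rw [Int.cast_sum, Finset.sum_div]
  apply Finset.sum_congr rfl
  intro k hk
  have hk' := Finset.mem_range.1 hk
  have hpow : (2:ℝ) ^ (n - (k+1)) * 2 ^ (k+1) = 2 ^ n := by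
    rw [← pow_add]; congr 1; omega
  beta_reduce
  split
  · push_cast
    rw [div_eq_div_iff (by positivity) (by positivity), mul_assoc, hpow]
  · push_cast
    simp

lemma cmap_eq_corner_of_dyadic (d : ℕ) {s : ℝ} (hs : 0 ≤ s) (n : ℕ) (t : ℝ) (z : ℤ)
    (h : 2 ^ (mf s n) * t = z) : cmap d s t = corner d s n t := by
  funext i
  unfold cmap
  rw [corner_eq_sum, ← (summable_cterm d s t i).sum_add_tsum_nat_add n]
  have hz : ∀ k : ℕ, cterm d s t i (k + n) = 0 := by
    intro k
    unfold cterm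
    split
    · rw [bit_eq_zero_of_int (mf s n) t _
        (le_trans (mf_mono hs (Nat.le_add_left n k)) (Nat.le_add_right _ i)) z h]
      simp
    · simp
  simp only [hz, tsum_zero, add_zero]

/-! ### Corner finsets and separated points -/

noncomputable def wext (M : ℕ) (w : Fin M → Fin 2) : ℕ → ℤ :=
  fun j => if h : j < M then ((w ⟨j, h⟩ : ℕ) : ℤ) else 0

lemma wext_mem (M : ℕ) (w : Fin M → Fin 2) (j : ℕ) : wext M w j = 0 ∨ wext M w j = 1 := by
  unfold wext
  split
  · next h => rcases Fin.exists_fin_two.1 ⟨w ⟨j, h⟩, rfl⟩ with h' | h' <;> simp [h'] <;> omega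
  · left; rfl

noncomputable def cornersFinset (d : ℕ) (s : ℝ) (n : ℕ) : Finset (Fin d → ℝ) :=
  Finset.image (fun w : Fin (mf s n) → Fin 2 => cornerOfW d s n (wext _ w)) Finset.univ

lemma card_cornersFinset_le (d : ℕ) (s : ℝ) (n : ℕ) :
    (cornersFinset d s n).card ≤ 2 ^ (mf s n) := by
  refine le_trans Finset.card_image_le ?_
  simp [Finset.card_univ]

lemma cornerOfW_congr (d : ℕ) {s : ℝ} (hs : 0 ≤ s) (n : ℕ) {w w' : ℕ → ℤ}
    (h : ∀ j < mf s n, w j = w' j) : cornerOfW d s n w = cornerOfW d s n w' := by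
  funext i
  apply Finset.sum_congr rfl
  intro k hk
  congr 1
  split
  · next hi => rw [h _ (index_lt hs (Finset.mem_range.1 hk) hi)]
  · rfl

lemma corner_mem (d : ℕ) {s : ℝ} (hs : 0 ≤ s) (n : ℕ) (t : ℝ) :
    corner d s n t ∈ cornersFinset d s n := by
  apply Finset.mem_image.2
  refine ⟨fun j => if bit (j : ℕ) t = 1 then 1 else 0, Finset.mem_univ _, ?_⟩
  refine (cornerOfW_congr d hs n ?_)
  intro j hj
  unfold wext
  rcases bit_mem j t with h | h <;> simp [hj, h]

/-! ### dyadic sample points -/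

def Aw (M : ℕ) (w : Fin M → Fin 2) : ℕ :=
  ∑ j ∈ Finset.range M, (if h : j < M then (w ⟨j, h⟩ : ℕ) else 0) * 2 ^ (M - 1 - j)

noncomputable def twv (M : ℕ) (w : Fin M → Fin 2) : ℝ := (Aw M w : ℝ) / 2 ^ M

lemma sum_two_pow (M : ℕ) : ∑ i ∈ Finset.range M, 2 ^ i = 2 ^ M - 1 := by
  induction M with
  | zero => simp
  | succ m ih => rw [Finset.sum_range_succ, ih]; have : 1 ≤ 2^m := Nat.one_le_two_pow; omega

lemma Aw_lt (M : ℕ) (w : Fin M → Fin 2) : Aw M w < 2 ^ M := by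
  have h1 : Aw M w ≤ ∑ j ∈ Finset.range M, 2 ^ (M - 1 - j) := by
    rw [Aw]
    apply Finset.sum_le_sum
    intro j hj
    have hv : (if h : j < M then (w ⟨j, h⟩ : ℕ) else 0) ≤ 1 := by
      split
      · next h => have := (w ⟨j, h⟩).2; omega
      · omega
    calc (if h : j < M then (w ⟨j, h⟩ : ℕ) else 0) * 2 ^ (M - 1 - j) ≤ 1 * 2 ^ (M - 1 - j) :=
      Nat.mul_le_mul_right _ hv
    _ = 2 ^ (M - 1 - j) := one_mul _
  have h2 : ∑ j ∈ Finset.range M, 2 ^ (M - 1 - j) = ∑ i ∈ Finset.range M, 2 ^ i := by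
    rw [Finset.sum_range_reflect]
  have := sum_two_pow M
  have h3 : 1 ≤ 2 ^ M := Nat.one_le_two_pow
  omega

lemma twv_mem (M : ℕ) (w : Fin M → Fin 2) : twv M w ∈ Ico (0:ℝ) 1 := by
  have h := Aw_lt M w
  have hp : (0:ℝ) < 2 ^ M := by positivity
  constructor
  · unfold twv; positivity
  · rw [twv, div_lt_one hp]
    exact_mod_cast h

lemma twv_dyadic (M : ℕ) (w : Fin M → Fin 2) : 2 ^ M * twv M w = ((Aw M w : ℤ) : ℝ) := by
  rw [twv]
  push_cast
  field_simp

lemma twv_as_sum (M : ℕ) (w : Fin M → Fin 2) :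
    twv M w = ∑ j ∈ Finset.range M, (wext M w j : ℝ) / 2 ^ (j + 1) := by
  rw [twv, Aw, Nat.cast_sum, Finset.sum_div]
  apply Finset.sum_congr rfl
  intro j hj
  have hj' := Finset.mem_range.1 hj
  unfold wext
  rw [dif_pos hj', dif_pos hj']
  have hpow : (2:ℝ) ^ (M - 1 - j) * 2 ^ (j + 1) = 2 ^ M := by
    rw [← pow_add]; congr 1; omega
  rw [div_eq_div_iff (by positivity) (by positivity)]
  push_cast
  rw [mul_assoc, hpow]

lemma floor_twv (M : ℕ) (w : Fin M → Fin 2) : ⌊2 ^ M * twv M w⌋ = (Aw M w : ℤ) := by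
  rw [twv_dyadic, Int.floor_intCast]

lemma twv_inj {d : ℕ} {s : ℝ} (hs : 0 ≤ s) (hsd : s ≤ (d:ℝ)) (n : ℕ)
    {w w' : Fin (mf s n) → Fin 2}
    (h : cmap d s (twv (mf s n) w) = cmap d s (twv (mf s n) w')) : w = w' := by
  have e1 : corner d s n (twv (mf s n) w) = corner d s n (twv (mf s n) w') := by
    rw [← cmap_eq_corner_of_dyadic d hs n _ _ (twv_dyadic (mf s n) w),
        ← cmap_eq_corner_of_dyadic d hs n _ _ (twv_dyadic (mf s n) w'), h]
  have hbits := corner_inj_bits hs hsd n e1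
  have hfl : (⌊2 ^ (mf s n) * twv (mf s n) w⌋ : ℝ) / 2 ^ (mf s n) - ⌊twv (mf s n) w⌋
      = (⌊2 ^ (mf s n) * twv (mf s n) w'⌋ : ℝ) / 2 ^ (mf s n) - ⌊twv (mf s n) w'⌋ := by
    rw [← sum_bit, ← sum_bit]
    exact Finset.sum_congr rfl fun j hj => by rw [hbits j (Finset.mem_range.1 hj)]
  have hfw : ⌊twv (mf s n) w⌋ = 0 := Int.floor_eq_zero_iff.2 ⟨(twv_mem (mf s n) w).1, (twv_mem (mf s n) w).2⟩
  have hfw' : ⌊twv (mf s n) w'⌋ = 0 := Int.floor_eq_zero_iff.2 ⟨(twv_mem (mf s n) w').1, (twv_mem (mf s n) w').2⟩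
  rw [hfw, hfw', floor_twv, floor_twv] at hfl
  have hA : Aw (mf s n) w = Aw (mf s n) w' := by
    have hp : (0:ℝ) < 2 ^ (mf s n) := by positivity
    simp only [Int.cast_zero, sub_zero] at hfl
    rw [div_left_inj' hp.ne'] at hfl
    exact_mod_cast hfl
  have htv : twv (mf s n) w = twv (mf s n) w' := by rw [twv, twv, hA]
  have hwe := bin_unique (mf s n) (wext (mf s n) w) (wext (mf s n) w') (fun k _ => wext_mem (mf s n) w k)
    (fun k _ => wext_mem (mf s n) w' k) (by rw [← twv_as_sum, ← twv_as_sum, htv])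
  funext j
  have := hwe j j.2 
  unfold wext at this
  rw [dif_pos j.2, dif_pos j.2] at this
  have hval : (w ⟨j, j.2⟩ : ℕ) = (w' ⟨j, j.2⟩ : ℕ) := by exact_mod_cast this
  have : w ⟨j, j.2⟩ = w' ⟨j, j.2⟩ := Fin.val_injective hval
  simpa using this

noncomputable def pts (d : ℕ) (s : ℝ) (n : ℕ) : Finset (Fin d → ℝ) :=
  Finset.image (fun w : Fin (mf s n) → Fin 2 => cmap d s (twv (mf s n) w)) Finset.univ

lemma card_pts {d : ℕ} {s : ℝ} (hs : 0 ≤ s) (hsd : s ≤ (d:ℝ)) (n : ℕ) :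
    (pts d s n).card = 2 ^ (mf s n) := by
  rw [pts, Finset.card_image_of_injective _ (fun w w' h => twv_inj hs hsd n h)]
  simp [Finset.card_univ]

lemma pts_separated {d : ℕ} {s : ℝ} (hs : 0 ≤ s) (n : ℕ) {p q : Fin d → ℝ}
    (hp : p ∈ pts d s n) (hq : q ∈ pts d s n) (hne : p ≠ q) : ((2:ℝ) ^ n)⁻¹ ≤ dist p q := by
  obtain ⟨w, -, rfl⟩ := Finset.mem_image.1 hp
  obtain ⟨w', -, rfl⟩ := Finset.mem_image.1 hq
  rw [cmap_eq_corner_of_dyadic d hs n _ _ (twv_dyadic _ w),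
      cmap_eq_corner_of_dyadic d hs n _ _ (twv_dyadic _ w')] at hne ⊢
  obtain ⟨i, hi⟩ := Function.ne_iff.1 hne
  obtain ⟨z, hz⟩ := corner_dyadic d s n (twv (mf s n) w) i
  obtain ⟨z', hz'⟩ := corner_dyadic d s n (twv (mf s n) w') i
  have hzz : z ≠ z' := by
    intro hc
    apply hi
    rw [hz, hz', hc]
  have h1 : (1:ℝ) ≤ |(z:ℝ) - z'| := by
    have : (1:ℝ) ≤ |((z - z' : ℤ) : ℝ)| := by
      exact_mod_cast Int.one_le_abs (by omega)
    simpa [Int.cast_sub] using this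
  calc ((2:ℝ) ^ n)⁻¹ ≤ |(z:ℝ) - z'| / 2 ^ n := by
        rw [le_div_iff₀ (by positivity)]
        simpa using h1
  _ = dist (corner d s n (twv (mf s n) w) i) (corner d s n (twv (mf s n) w') i) := by
        rw [Real.dist_eq, hz, hz', div_sub_div_same, abs_div, abs_of_pos (a := (2:ℝ)^n) (by positivity)]
  _ ≤ dist (corner d s n (twv (mf s n) w)) (corner d s n (twv (mf s n) w')) := dist_le_pi_dist _ _ i


/-! ### The measure -/

lemma measurable_bitR (j : ℕ) : Measurable fun t : ℝ => (bit j t : ℝ) := by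
  unfold bit
  have h1 : Measurable fun t : ℝ => ⌊2 ^ (j+1) * t⌋ :=
    Int.measurable_floor.comp (measurable_const_mul _)
  have h2 : Measurable fun t : ℝ => ⌊2 ^ j * t⌋ :=
    Int.measurable_floor.comp (measurable_const_mul _)
  have hcast : Measurable fun z : ℤ => (z : ℝ) := measurable_from_top
  push_cast
  exact (hcast.comp h1).sub ((hcast.comp h2).const_mul 2)

lemma measurable_cmap (d : ℕ) (s : ℝ) : Measurable (cmap d s) := by
  apply measurable_pi_lambda
  intro i
  have hterm : ∀ k, Measurable fun t => cterm d s t i k := by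
    intro k
    unfold cterm
    by_cases hc : (i : ℕ) < df s (k + 1)
    · simp only [hc, if_true]
      exact (measurable_bitR _).div_const _
    · simp only [hc, if_false]
      exact measurable_const.div_const _
  have hpart : ∀ N, Measurable fun t => ∑ k ∈ Finset.range N, cterm d s t i k :=
    fun N => Finset.measurable_sum _ fun k _ => hterm k
  apply measurable_of_tendsto_metrizable hpart
  rw [tendsto_pi_nhds]
  intro t
  exact (summable_cterm d s t i).hasSum.tendsto_sum_nat

noncomputable def mmu (d : ℕ) (s : ℝ) : Measure (Fin d → ℝ) :=
  Measure.map (cmap d s) ((volume : Measure ℝ).restrict (Ico 0 1))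

lemma mmu_apply (d : ℕ) (s : ℝ) {B : Set (Fin d → ℝ)} (hB : MeasurableSet B) :
    mmu d s B = volume (cmap d s ⁻¹' B ∩ Ico 0 1) := by
  rw [mmu, Measure.map_apply (measurable_cmap d s) hB,
    Measure.restrict_apply (hB.preimage (measurable_cmap d s))]

lemma mmu_prob (d : ℕ) (s : ℝ) : IsProbabilityMeasure (mmu d s) := by
  constructor
  rw [mmu_apply d s MeasurableSet.univ]
  simp [Real.volume_Ico]

lemma cmap_nonneg (d : ℕ) (s : ℝ) (t : ℝ) (i : Fin d) : 0 ≤ cmap d s t i :=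
  tsum_nonneg fun k => cterm_nonneg d s t i k

lemma cmap_le_one (d : ℕ) (s : ℝ) (t : ℝ) (i : Fin d) : cmap d s t i ≤ 1 := by
  have h := (corner_le_cmap d s 0 t i).2
  have h0 : corner d s 0 t i = 0 := by
    rw [corner_eq_sum]
    simp
  rw [h0] at h
  simpa using h

lemma mmu_Icc (d : ℕ) (s : ℝ) : mmu d s (Icc 0 1) = 1 := by
  rw [mmu_apply d s measurableSet_Icc]
  have : cmap d s ⁻¹' Icc 0 1 ∩ Ico 0 1 = Ico 0 1 := by
    apply inter_eq_right.2
    intro t _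
    simp only [mem_preimage, mem_Icc]
    constructor
    · intro i; exact cmap_nonneg d s t i
    · intro i; exact cmap_le_one d s t i
  rw [this]
  simp [Real.volume_Ico]

/-! ### Mass of small balls -/

lemma corner_fiber_bound {d : ℕ} {s : ℝ} (hs : 0 ≤ s) (hsd : s ≤ (d:ℝ)) (n : ℕ)
    (c : Fin d → ℝ) :
    volume {t : ℝ | t ∈ Ico (0:ℝ) 1 ∧ corner d s n t = c} ≤
      ENNReal.ofReal (((2:ℝ) ^ (mf s n))⁻¹) := by
  set T := {t : ℝ | t ∈ Ico (0:ℝ) 1 ∧ corner d s n t = c} with hT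
  rcases eq_empty_or_nonempty T with hemp | ⟨t', ht'⟩
  · rw [hemp]; simp
  have hsub : T ⊆ Ico ((⌊2 ^ (mf s n) * t'⌋ : ℝ) / 2 ^ (mf s n))
      ((⌊2 ^ (mf s n) * t'⌋ + 1 : ℝ) / 2 ^ (mf s n)) := by
    intro t ht
    have hbits : ∀ j < mf s n, bit j t = bit j t' :=
      corner_inj_bits hs hsd n (ht.2.trans ht'.2.symm)
    have hfl : (⌊2 ^ (mf s n) * t⌋ : ℝ) / 2 ^ (mf s n) - ⌊t⌋
        = (⌊2 ^ (mf s n) * t'⌋ : ℝ) / 2 ^ (mf s n) - ⌊t'⌋ := by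
      rw [← sum_bit, ← sum_bit]
      exact Finset.sum_congr rfl fun j hj => by rw [hbits j (Finset.mem_range.1 hj)]
    have hft : ⌊t⌋ = 0 := Int.floor_eq_zero_iff.2 ⟨ht.1.1, ht.1.2⟩
    have hft' : ⌊t'⌋ = 0 := Int.floor_eq_zero_iff.2 ⟨ht'.1.1, ht'.1.2⟩
    rw [hft, hft'] at hfl
    have hp : (0:ℝ) < 2 ^ (mf s n) := by positivity
    have hK : ⌊2 ^ (mf s n) * t⌋ = ⌊2 ^ (mf s n) * t'⌋ := by
      have : (⌊2 ^ (mf s n) * t⌋ : ℝ) = ⌊2 ^ (mf s n) * t'⌋ := by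
        simp only [Int.cast_zero, sub_zero] at hfl
        exact (div_left_inj' hp.ne').1 hfl
      exact_mod_cast this
    constructor
    · rw [div_le_iff₀ hp]
      rw [← hK]
      linarith [Int.floor_le (2 ^ (mf s n) * t), mul_comm ((⌊2 ^ (mf s n) * t⌋ : ℝ)) ((2:ℝ)^(mf s n))]
    · rw [lt_div_iff₀ hp]
      rw [← hK]
      linarith [Int.lt_floor_add_one (2 ^ (mf s n) * t)]
  calc volume T ≤ volume (Ico ((⌊2 ^ (mf s n) * t'⌋ : ℝ) / 2 ^ (mf s n))
      ((⌊2 ^ (mf s n) * t'⌋ + 1 : ℝ) / 2 ^ (mf s n))) := measure_mono hsub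
  _ = ENNReal.ofReal (((2:ℝ) ^ (mf s n))⁻¹) := by
      rw [Real.volume_Ico]
      congr 1
      have hp : (0:ℝ) < 2 ^ (mf s n) := by positivity
      field_simp
      ring
  _ ≤ ENNReal.ofReal (((2:ℝ) ^ (mf s n))⁻¹) := le_refl _

lemma ball_mass {d : ℕ} {s : ℝ} (hs : 0 ≤ s) (hsd : s ≤ (d:ℝ)) (n : ℕ) (x : Fin d → ℝ)
    {ε : ℝ} (hε0 : 0 ≤ ε) (hεn : ε ≤ ((2:ℝ) ^ n)⁻¹) :
    mmu d s (Metric.closedBall x ε) ≤ (5 ^ d : ℝ≥0∞) * ENNReal.ofReal (((2:ℝ) ^ (mf s n))⁻¹) := by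
  rw [mmu_apply d s measurableSet_closedBall]
  set ι := Fin d → (Finset.Icc (-2:ℤ) 2) with hι
  have hsub : cmap d s ⁻¹' Metric.closedBall x ε ∩ Ico 0 1 ⊆
      ⋃ v : ι, {t : ℝ | t ∈ Ico (0:ℝ) 1 ∧
        corner d s n t = fun i => ((⌊2 ^ n * x i⌋ : ℝ) + ((v i : ℤ) : ℝ)) / 2 ^ n} := by
    rintro t ⟨hball, ht01⟩
    choose z hz using fun i => corner_dyadic d s n t i
    have hp : (0:ℝ) < 2 ^ n := by positivity
    have hv : ∀ i, z i - ⌊2 ^ n * x i⌋ ∈ Finset.Icc (-2:ℤ) 2 := by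
      intro i
      have hco : |cmap d s t i - x i| ≤ ε := by
        rw [← Real.dist_eq]
        exact le_trans (dist_le_pi_dist _ _ i) (Metric.mem_closedBall.1 hball)
      have hcc := corner_le_cmap d s n t i
      have habs : |corner d s n t i - x i| ≤ 2 * ((2:ℝ)^n)⁻¹ := by
        rw [abs_le] at hco ⊢
        constructor <;> nlinarith [hcc.1, hcc.2]
      rw [hz i] at habs
      rw [abs_le] at habs
      have hfl1 := Int.floor_le (2 ^ n * x i)
      have hfl2 := Int.lt_floor_add_one (2 ^ n * x i)
      have h2n1 : (2:ℝ)^n * ((2:ℝ)^n)⁻¹ = 1 := mul_inv_cancel₀ (ne_of_gt hp)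
      have hzq : (z i : ℝ) = (z i / 2 ^ n) * 2 ^ n := by field_simp
      have hle1 : (z i : ℝ) < (⌊2 ^ n * x i⌋ : ℝ) + 3 := by
        have h := habs.2
        have hz2 : (z i : ℝ) ≤ 2 ^ n * x i + 2 := by nlinarith [h, h2n1, hp, hzq]
        linarith [hfl2]
      have hle2 : (⌊2 ^ n * x i⌋ : ℝ) - 2 ≤ z i := by
        have h := habs.1
        have hz2 : 2 ^ n * x i - 2 ≤ (z i : ℝ) := by nlinarith [h, h2n1, hp, hzq]
        linarith [hfl1]
      have hi1 : z i < ⌊2 ^ n * x i⌋ + 3 := by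
        exact_mod_cast (by push_cast; linarith : (z i : ℝ) < ((⌊2 ^ n * x i⌋ + 3 : ℤ) : ℝ))
      have hi2 : ⌊2 ^ n * x i⌋ - 2 ≤ z i := by
        exact_mod_cast (by push_cast; linarith : ((⌊2 ^ n * x i⌋ - 2 : ℤ) : ℝ) ≤ (z i : ℝ))
      rw [Finset.mem_Icc]
      omega
    refine mem_iUnion.2 ⟨fun i => ⟨z i - ⌊2 ^ n * x i⌋, hv i⟩, ht01, ?_⟩
    funext i
    rw [hz i]
    push_cast
    ring
  calc volume (cmap d s ⁻¹' Metric.closedBall x ε ∩ Ico 0 1)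
      ≤ volume (⋃ v : ι, {t : ℝ | t ∈ Ico (0:ℝ) 1 ∧
        corner d s n t = fun i => ((⌊2 ^ n * x i⌋ : ℝ) + ((v i : ℤ) : ℝ)) / 2 ^ n}) :=
        measure_mono hsub
  _ ≤ ∑' v : ι, volume {t : ℝ | t ∈ Ico (0:ℝ) 1 ∧
        corner d s n t = fun i => ((⌊2 ^ n * x i⌋ : ℝ) + ((v i : ℤ) : ℝ)) / 2 ^ n} :=
        measure_iUnion_le _
  _ ≤ ∑' _v : ι, ENNReal.ofReal (((2:ℝ) ^ (mf s n))⁻¹) :=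
        Summable.tsum_le_tsum (fun v => corner_fiber_bound hs hsd n _) ENNReal.summable ENNReal.summable
  _ = (Fintype.card ι : ℝ≥0∞) * ENNReal.ofReal (((2:ℝ) ^ (mf s n))⁻¹) := by
        rw [tsum_fintype]
        simp [Finset.card_univ, nsmul_eq_mul]
  _ ≤ (5 ^ d : ℝ≥0∞) * ENNReal.ofReal (((2:ℝ) ^ (mf s n))⁻¹) := by
        apply mul_le_mul_left
        have hcard : Fintype.card ι = 5 ^ d := by
          show Fintype.card (Fin d → (Finset.Icc (-2:ℤ) 2)) = 5 ^ d
          rw [Fintype.card_fun, Fintype.card_coe, Int.card_Icc, Fintype.card_fin]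
          rfl
        rw [hcard]
        norm_num

/-! ### Support -/

noncomputable def Sset (d : ℕ) (s : ℝ) (n : ℕ) : Set (Fin d → ℝ) :=
  ⋃ c ∈ cornersFinset d s n, Metric.closedBall c ((2:ℝ) ^ n)⁻¹

lemma Sset_closed (d : ℕ) (s : ℝ) (n : ℕ) : IsClosed (Sset d s n) :=
  (cornersFinset d s n).finite_toSet.isClosed_biUnion fun c _ => Metric.isClosed_closedBall

lemma Sset_meas (d : ℕ) (s : ℝ) (n : ℕ) : MeasurableSet (Sset d s n) :=
  (Sset_closed d s n).measurableSet

lemma cmap_mem_Sset (d : ℕ) {s : ℝ} (hs : 0 ≤ s) (n : ℕ) (t : ℝ) :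
    cmap d s t ∈ Sset d s n := by
  apply mem_biUnion (corner_mem d hs n t)
  exact Metric.mem_closedBall.2 (dist_cmap_corner d s n t)

lemma mmu_Sset (d : ℕ) {s : ℝ} (hs : 0 ≤ s) (n : ℕ) : mmu d s (Sset d s n) = 1 := by
  rw [mmu_apply d s (Sset_meas d s n)]
  have he : cmap d s ⁻¹' Sset d s n ∩ Ico 0 1 = Ico 0 1 :=
    inter_eq_right.2 fun t _ => cmap_mem_Sset d hs n t
  rw [he]
  simp [Real.volume_Ico]

lemma cmap_mem_msupport (d : ℕ) {s : ℝ} (hs : 0 ≤ s) {t₀ : ℝ} (ht₀ : t₀ ∈ Ico (0:ℝ) 1) :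
    cmap d s t₀ ∈ msupport (mmu d s) := by
  intro r hr
  obtain ⟨N, hN⟩ : ∃ N : ℕ, ((2:ℝ) ^ N)⁻¹ < r / 2 := by
    obtain ⟨N, hN⟩ := pow_unbounded_of_one_lt (2 / r) (one_lt_two (α := ℝ))
    refine ⟨N, ?_⟩
    have h1 : ((2:ℝ) ^ N)⁻¹ < (2 / r)⁻¹ := by
      apply inv_strictAnti₀ (by positivity) hN
    rwa [inv_div] at h1
  have hp : (0:ℝ) < 2 ^ (mf s N) := by positivity
  set K : ℤ := ⌊2 ^ (mf s N) * t₀⌋ with hK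
  have hKmem : 2 ^ (mf s N) * t₀ ∈ Ico (K:ℝ) (K + 1) := ⟨Int.floor_le _, Int.lt_floor_add_one _⟩
  have hI : Ico ((K:ℝ) / 2 ^ (mf s N)) ((K + 1 : ℝ) / 2 ^ (mf s N)) ⊆
      cmap d s ⁻¹' Metric.ball (cmap d s t₀) r ∩ Ico 0 1 := by
    intro t ht
    have ht01 : t ∈ Ico (0:ℝ) 1 := by
      constructor
      · have hK0 : (0:ℤ) ≤ K := by
          rw [hK]
          apply Int.floor_nonneg.2
          nlinarith [ht₀.1]
        have : (0:ℝ) ≤ (K:ℝ) / 2 ^ (mf s N) := by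
          apply div_nonneg _ (le_of_lt hp)
          exact_mod_cast hK0
        linarith [ht.1]
      · have hKlt : (K:ℝ) < 2 ^ (mf s N) := by
          calc (K:ℝ) ≤ 2 ^ (mf s N) * t₀ := hKmem.1
          _ < 2 ^ (mf s N) * 1 := by nlinarith [ht₀.2]
          _ = 2 ^ (mf s N) := mul_one _
        have hKint : K + 1 ≤ (2 ^ (mf s N) : ℤ) := by
          have h' : K < (2 ^ (mf s N) : ℤ) := by exact_mod_cast (by push_cast; linarith : (K:ℝ) < ((2 ^ (mf s N) : ℤ) : ℝ))
          omega
        have hK1 : (K:ℝ) + 1 ≤ 2 ^ (mf s N) := by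
          have h'' : ((K + 1 : ℤ) : ℝ) ≤ ((2 ^ (mf s N) : ℤ) : ℝ) := by exact_mod_cast hKint
          push_cast at h''
          linarith
        calc t < ((K:ℝ) + 1) / 2 ^ (mf s N) := ht.2
        _ ≤ 2 ^ (mf s N) / 2 ^ (mf s N) := by gcongr
        _ = 1 := div_self (ne_of_gt hp)
    have hfloor : ⌊2 ^ (mf s N) * t⌋ = K := by
      apply Int.floor_eq_iff.2
      constructor
      · calc (K:ℝ) = (K:ℝ) / 2 ^ (mf s N) * 2 ^ (mf s N) := by field_simp
        _ ≤ t * 2 ^ (mf s N) := by nlinarith [ht.1]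
        _ = 2 ^ (mf s N) * t := mul_comm _ _
      · calc 2 ^ (mf s N) * t < 2 ^ (mf s N) * (((K:ℝ) + 1) / 2 ^ (mf s N)) := by nlinarith [ht.2]
        _ = (K:ℝ) + 1 := by field_simp
    have hbits := bits_of_floor (mf s N) t t₀ (by rw [hfloor])
    have hcorner : corner d s N t = corner d s N t₀ := corner_congr d hs N hbits
    refine ⟨?_, ht01⟩
    show cmap d s t ∈ Metric.ball (cmap d s t₀) r
    rw [Metric.mem_ball]
    have hd1 := dist_cmap_corner d s N t
    have hd2 := dist_cmap_corner d s N t₀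
    calc dist (cmap d s t) (cmap d s t₀)
        ≤ dist (cmap d s t) (corner d s N t) + dist (corner d s N t) (cmap d s t₀) :=
          dist_triangle _ _ _
    _ = dist (cmap d s t) (corner d s N t) + dist (cmap d s t₀) (corner d s N t₀) := by
          rw [hcorner, dist_comm (corner d s N t₀) (cmap d s t₀)]
    _ ≤ ((2:ℝ) ^ N)⁻¹ + ((2:ℝ) ^ N)⁻¹ := add_le_add hd1 hd2
    _ < r / 2 + r / 2 := add_lt_add hN hN
    _ = r := by ring
  have hvol : 0 < volume (Ico ((K:ℝ) / 2 ^ (mf s N)) ((K + 1 : ℝ) / 2 ^ (mf s N))) := by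
    rw [Real.volume_Ico]
    apply ENNReal.ofReal_pos.2
    rw [div_sub_div_same]
    have he1 : ((K:ℝ) + 1) - K = 1 := by ring
    rw [he1]
    positivity
  calc (0:ℝ≥0∞) < volume (Ico ((K:ℝ) / 2 ^ (mf s N)) ((K + 1 : ℝ) / 2 ^ (mf s N))) := hvol
  _ ≤ volume (cmap d s ⁻¹' Metric.ball (cmap d s t₀) r ∩ Ico 0 1) := measure_mono hI
  _ = mmu d s (Metric.ball (cmap d s t₀) r) := (mmu_apply d s measurableSet_ball).symm

lemma msupport_subset (d : ℕ) {s : ℝ} (hs : 0 ≤ s) (n : ℕ) :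
    msupport (mmu d s) ⊆ Sset d s n := by
  intro x hx
  by_contra hxS
  obtain ⟨r, hr, hball⟩ := Metric.isOpen_iff.1 (Sset_closed d s n).isOpen_compl x hxS
  have h0 := hx r hr
  have hz : mmu d s (Metric.ball x r) = 0 := by
    rw [mmu_apply d s measurableSet_ball]
    have he : cmap d s ⁻¹' Metric.ball x r ∩ Ico 0 1 = ∅ := by
      apply eq_empty_iff_forall_notMem.2
      rintro t ⟨htb, -⟩
      exact (hball htb) (cmap_mem_Sset d hs n t)
    rw [he]
    simp
  rw [hz] at h0
  exact lt_irrefl 0 h0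

/-! ### covering number lemmas -/

lemma coverN_le_card {X : Type*} [PseudoMetricSpace X] {ε : ℝ} {S : Set X} (t : Finset X)
    (h : S ⊆ ⋃ x ∈ t, Metric.closedBall x ε) : coverN ε S ≤ t.card :=
  iInf_le_of_le t (iInf_le _ h)

lemma le_coverN {X : Type*} [PseudoMetricSpace X] {ε : ℝ} {S : Set X} {c : ℕ}
    (h : ∀ t : Finset X, S ⊆ ⋃ x ∈ t, Metric.closedBall x ε → c ≤ t.card) :
    (c : ℕ∞) ≤ coverN ε S :=
  le_iInf fun t => le_iInf fun ht => by exact_mod_cast h t ht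

lemma coverN_mono {X : Type*} [PseudoMetricSpace X] {ε : ℝ} {S S' : Set X} (h : S ⊆ S') :
    coverN ε S ≤ coverN ε S' :=
  le_iInf fun t => le_iInf fun ht => coverN_le_card t (h.trans ht)

lemma coverN_mono_rad {X : Type*} [PseudoMetricSpace X] {ε ε' : ℝ} (hε : ε ≤ ε') {S : Set X} :
    coverN ε' S ≤ coverN ε S :=
  le_iInf fun t => le_iInf fun ht => coverN_le_card t
    (ht.trans (iUnion₂_mono fun c _ => Metric.closedBall_subset_closedBall hε))

lemma measCoverN_le {X : Type*} [PseudoMetricSpace X] [MeasurableSpace X] {μ : Measure X}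
    {ε τ : ℝ} {S : Set X} (hS : MeasurableSet S) (hμ : ENNReal.ofReal (1 - τ) ≤ μ S) :
    measCoverN μ ε τ ≤ coverN ε S :=
  iInf_le_of_le S (iInf_le_of_le hS (iInf_le _ hμ))

lemma le_measCoverN {X : Type*} [PseudoMetricSpace X] [MeasurableSpace X] {μ : Measure X}
    {ε τ : ℝ} {c : ℕ∞}
    (h : ∀ S : Set X, MeasurableSet S → ENNReal.ofReal (1 - τ) ≤ μ S → c ≤ coverN ε S) :
    c ≤ measCoverN μ ε τ :=
  le_iInf fun S => le_iInf fun hS => le_iInf fun hμ => h S hS hμ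

lemma le_coverN_of_separated {X : Type*} [PseudoMetricSpace X] {ε r : ℝ} (hε : 0 ≤ ε)
    (h2 : 2 * ε < r) (P : Finset X) (hsep : ∀ p ∈ P, ∀ q ∈ P, p ≠ q → r ≤ dist p q)
    {S : Set X} (hPS : ↑P ⊆ S) : (P.card : ℕ∞) ≤ coverN ε S := by
  classical
  apply le_coverN
  intro t ht
  by_contra hc
  push_neg at hc
  have hmap : ∀ p ∈ P, ∃ c ∈ t, p ∈ Metric.closedBall c ε := by
    intro p hp
    have := ht (hPS hp)
    simpa using this
  let F : X → X := fun p => if h : ∃ c ∈ t, p ∈ Metric.closedBall c ε then h.choose else p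
  have hFmem : ∀ p ∈ P, F p ∈ t := by
    intro p hp
    have h := hmap p hp
    simp only [F]
    rw [dif_pos h]
    exact h.choose_spec.1
  have hFdist : ∀ p ∈ P, dist p (F p) ≤ ε := by
    intro p hp
    have h := hmap p hp
    simp only [F]
    rw [dif_pos h]
    exact Metric.mem_closedBall.1 h.choose_spec.2
  obtain ⟨p, hp, q, hq, hne, heq⟩ := Finset.exists_ne_map_eq_of_card_lt_of_maps_to hc hFmem
  have hd := hsep p hp q hq hne
  have : dist p q ≤ 2 * ε := by
    calc dist p q ≤ dist p (F p) + dist (F p) q := dist_triangle _ _ _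
    _ = dist p (F p) + dist q (F q) := by
        have he2 : dist (F p) q = dist q (F q) := by rw [heq]; exact dist_comm _ _
        rw [he2]
    _ ≤ ε + ε := add_le_add (hFdist p hp) (hFdist q hq)
    _ = 2 * ε := by ring
  linarith

/-! ### Quantitative covering bounds -/

lemma coverN_Sset_le (d : ℕ) (s : ℝ) (n : ℕ) {ε : ℝ} (hε : ((2:ℝ) ^ n)⁻¹ ≤ ε) :
    coverN ε (Sset d s n) ≤ ((2 ^ (mf s n) : ℕ) : ℕ∞) := by
  have hsub : Sset d s n ⊆ ⋃ c ∈ cornersFinset d s n, Metric.closedBall c ε :=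
    iUnion₂_mono fun c _ => Metric.closedBall_subset_closedBall hε
  calc coverN ε (Sset d s n) ≤ ((cornersFinset d s n).card : ℕ∞) :=
    coverN_le_card _ hsub
  _ ≤ ((2 ^ (mf s n) : ℕ) : ℕ∞) := by exact_mod_cast card_cornersFinset_le d s n

lemma coverN_msupport_le (d : ℕ) {s : ℝ} (hs : 0 ≤ s) (n : ℕ) {ε : ℝ}
    (hε : ((2:ℝ) ^ n)⁻¹ ≤ ε) :
    coverN ε (msupport (mmu d s)) ≤ ((2 ^ (mf s n) : ℕ) : ℕ∞) :=
  le_trans (coverN_mono (msupport_subset d hs n)) (coverN_Sset_le d s n hε)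

lemma measCoverN_le_pow (d : ℕ) {s : ℝ} (hs : 0 ≤ s) (n : ℕ) {ε τ : ℝ} (hτ : 0 ≤ τ)
    (hε : ((2:ℝ) ^ n)⁻¹ ≤ ε) :
    measCoverN (mmu d s) ε τ ≤ ((2 ^ (mf s n) : ℕ) : ℕ∞) := by
  refine le_trans (measCoverN_le (Sset_meas d s n) ?_) (coverN_Sset_le d s n hε)
  rw [mmu_Sset d hs n]
  exact ENNReal.ofReal_le_one.2 (by linarith)

lemma coverN_msupport_lower {d : ℕ} {s : ℝ} (hs : 0 ≤ s) (hsd : s ≤ (d:ℝ)) (n : ℕ) {ε : ℝ}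
    (hε0 : 0 ≤ ε) (h2 : 2 * ε < ((2:ℝ) ^ n)⁻¹) :
    ((2 ^ (mf s n) : ℕ) : ℕ∞) ≤ coverN ε (msupport (mmu d s)) := by
  rw [← card_pts hs hsd n]
  apply le_coverN_of_separated hε0 h2 (pts d s n)
    (fun p hp q hq hne => pts_separated hs n hp hq hne)
  intro p hp
  obtain ⟨w, -, rfl⟩ := Finset.mem_image.1 (Finset.mem_coe.1 hp)
  exact cmap_mem_msupport d hs (twv_mem _ w)

lemma measCoverN_lower {d : ℕ} {s : ℝ} (hs : 0 ≤ s) (hsd : s ≤ (d:ℝ)) (n : ℕ) {ε τ : ℝ}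
    (hε0 : 0 < ε) (hεn : ε ≤ ((2:ℝ) ^ n)⁻¹) :
    ((⌈(1 - τ) * 2 ^ (mf s n) / 5 ^ d⌉₊ : ℕ) : ℕ∞) ≤ measCoverN (mmu d s) ε τ := by
  apply le_measCoverN
  intro S hS hμ
  apply le_coverN
  intro t ht
  have hp2 : (0:ℝ) < 2 ^ (mf s n) := by positivity
  have hmass : ENNReal.ofReal (1 - τ) ≤
      ENNReal.ofReal ((t.card : ℝ) * ((5:ℝ) ^ d * ((2:ℝ) ^ (mf s n))⁻¹)) := by
    calc ENNReal.ofReal (1 - τ) ≤ mmu d s S := hμ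
    _ ≤ mmu d s (⋃ c ∈ t, Metric.closedBall c ε) := measure_mono ht
    _ ≤ ∑ c ∈ t, mmu d s (Metric.closedBall c ε) := measure_biUnion_finset_le _ _
    _ ≤ ∑ _c ∈ t, ((5:ℝ≥0∞) ^ d * ENNReal.ofReal (((2:ℝ) ^ (mf s n))⁻¹)) :=
        Finset.sum_le_sum fun c _ => ball_mass hs hsd n c (le_of_lt hε0) hεn
    _ = (t.card : ℝ≥0∞) * ((5:ℝ≥0∞) ^ d * ENNReal.ofReal (((2:ℝ) ^ (mf s n))⁻¹)) := by
        rw [Finset.sum_const, nsmul_eq_mul]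
    _ = ENNReal.ofReal ((t.card : ℝ) * ((5:ℝ) ^ d * ((2:ℝ) ^ (mf s n))⁻¹)) := by
        rw [ENNReal.ofReal_mul (by positivity), ENNReal.ofReal_mul (by positivity)]
        congr 1
        · rw [ENNReal.ofReal_natCast]
        · congr 1
          rw [ENNReal.ofReal_pow (by norm_num : (0:ℝ) ≤ 5), ENNReal.ofReal_ofNat]
  have hreal : 1 - τ ≤ (t.card : ℝ) * ((5:ℝ) ^ d * ((2:ℝ) ^ (mf s n))⁻¹) :=
    (ENNReal.ofReal_le_ofReal_iff (by positivity)).1 hmass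
  apply Nat.ceil_le.2
  rw [div_le_iff₀ (by positivity)]
  have hmul := mul_le_mul_of_nonneg_right hreal (le_of_lt hp2)
  have he : (t.card : ℝ) * ((5:ℝ) ^ d * ((2:ℝ) ^ (mf s n))⁻¹) * 2 ^ (mf s n)
      = (t.card : ℝ) * 5 ^ d := by
    field_simp
  rw [he] at hmul
  linarith

/-! ### dimRatio lemmas -/

lemma dimRatio_eq (Nn : ℕ) (hN : 1 ≤ Nn) (ε : ℝ) :
    dimRatio ((Nn : ℕ∞)) ε = ((Real.log Nn * (Real.log (1 / ε))⁻¹ : ℝ) : EReal) := by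
  unfold dimRatio elog
  have h1 : (((Nn : ℕ∞)) : ℝ≥0∞) = ((Nn : ℕ) : ℝ≥0∞) := by
    simp
  have hne : ((Nn : ℕ) : ℝ≥0∞) ≠ 0 := by
    exact_mod_cast Nat.one_le_iff_ne_zero.1 hN
  rw [h1, if_neg hne, if_neg (by simp : ((Nn : ℕ) : ℝ≥0∞) ≠ ⊤), ← EReal.coe_mul]
  norm_num

lemma dimRatio_between (Q : ℕ∞) (aN bN : ℕ) (h1 : 1 ≤ aN) (hlo : ((aN : ℕ) : ℕ∞) ≤ Q)
    (hup : Q ≤ ((bN : ℕ) : ℕ∞)) (ε : ℝ) (hε0 : 0 < ε) (hε1 : ε < 1) :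
    ((Real.log aN * (Real.log (1 / ε))⁻¹ : ℝ) : EReal) ≤ dimRatio Q ε ∧
      dimRatio Q ε ≤ ((Real.log bN * (Real.log (1 / ε))⁻¹ : ℝ) : EReal) := by
  have hbtop : ((bN : ℕ) : ℕ∞) ≠ ⊤ := by simp
  have hQtop : Q ≠ ⊤ := ne_top_of_le_ne_top hbtop hup
  have hQ : Q = ((Q.toNat : ℕ) : ℕ∞) := (ENat.coe_toNat hQtop).symm
  rw [hQ] at hlo hup ⊢
  have hlo' : aN ≤ Q.toNat := by exact_mod_cast hlo
  have hup' : Q.toNat ≤ bN := by exact_mod_cast hup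
  have hN1 : 1 ≤ Q.toNat := le_trans h1 hlo'
  rw [dimRatio_eq _ hN1]
  have hL : 0 < Real.log (1 / ε) := by
    apply Real.log_pos
    rw [lt_div_iff₀ hε0]
    linarith
  have hinv : 0 ≤ (Real.log (1 / ε))⁻¹ := le_of_lt (inv_pos.2 hL)
  constructor <;> rw [EReal.coe_le_coe_iff]
  · apply mul_le_mul_of_nonneg_right _ hinv
    exact Real.log_le_log (by exact_mod_cast Nat.lt_of_lt_of_le Nat.zero_lt_one h1) (by exact_mod_cast hlo')
  · apply mul_le_mul_of_nonneg_right _ hinv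
    exact Real.log_le_log (by exact_mod_cast Nat.lt_of_lt_of_le Nat.zero_lt_one hN1) (by exact_mod_cast hup')

/-! ### Scale facts and limit machinery -/

lemma scale_facts {ε : ℝ} (hε0 : 0 < ε) (hε14 : ε ≤ 1/4) :
    ∃ n : ℕ, 2 ≤ n ∧ ε ≤ ((2:ℝ) ^ n)⁻¹ ∧ ((2:ℝ) ^ (n+1))⁻¹ ≤ ε ∧
      (n : ℝ) ≤ Real.log (1/ε) / Real.log 2 ∧
      Real.log (1/ε) / Real.log 2 - 1 ≤ (n : ℝ) ∧ 0 < Real.log (1/ε) := by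
  have hinv4 : (4:ℝ) ≤ ε⁻¹ := by
    rw [le_inv_comm₀ (by norm_num) hε0]
    linarith
  have hinv1 : (1:ℝ) < ε⁻¹ := by linarith
  have hlogb0 : 0 ≤ Real.logb 2 ε⁻¹ := Real.logb_nonneg one_lt_two (le_of_lt hinv1)
  have hL : 0 < Real.log (1/ε) := by
    rw [one_div]
    exact Real.log_pos hinv1
  have hlogbL : Real.logb 2 ε⁻¹ = Real.log (1/ε) / Real.log 2 := by
    rw [Real.logb, one_div]
  refine ⟨⌊Real.logb 2 ε⁻¹⌋₊, ?_, ?_, ?_, ?_, ?_, hL⟩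
  · apply Nat.le_floor
    have h4 : Real.logb 2 (4:ℝ) ≤ Real.logb 2 ε⁻¹ :=
      Real.logb_le_logb_of_le one_lt_two (by norm_num) hinv4
    have he : Real.logb 2 (4:ℝ) = 2 := by
      rw [show (4:ℝ) = 2 ^ (2:ℕ) by norm_num, Real.logb_pow,
        Real.logb_self_eq_one one_lt_two]
      norm_num
    rw [he] at h4
    exact_mod_cast h4
  · have h1 : (2:ℝ) ^ (⌊Real.logb 2 ε⁻¹⌋₊ : ℕ) ≤ ε⁻¹ := by
      have h2 : (2:ℝ) ^ ((⌊Real.logb 2 ε⁻¹⌋₊ : ℕ) : ℝ) ≤ (2:ℝ) ^ (Real.logb 2 ε⁻¹) :=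
        Real.rpow_le_rpow_of_exponent_le one_le_two (Nat.floor_le hlogb0)
      rw [Real.rpow_natCast] at h2
      rwa [Real.rpow_logb (by norm_num) (by norm_num) (by positivity)] at h2
    rw [le_inv_comm₀ hε0 (by positivity)]
    exact h1
  · have h2 : ε⁻¹ < (2:ℝ) ^ ((⌊Real.logb 2 ε⁻¹⌋₊ : ℕ) + 1) := by
      have h3 : (2:ℝ) ^ (Real.logb 2 ε⁻¹) < (2:ℝ) ^ (((⌊Real.logb 2 ε⁻¹⌋₊ : ℕ) : ℝ) + 1) :=
        Real.rpow_lt_rpow_of_exponent_lt one_lt_two (Nat.lt_floor_add_one _)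
      rw [Real.rpow_logb (by norm_num) (by norm_num) (by positivity)] at h3
      rw [show (((⌊Real.logb 2 ε⁻¹⌋₊ : ℕ) : ℝ) + 1) = (((⌊Real.logb 2 ε⁻¹⌋₊ + 1 : ℕ)) : ℝ)
        by push_cast; ring, Real.rpow_natCast] at h3
      exact h3
    rw [inv_le_comm₀ (by positivity) hε0]
    exact le_of_lt h2
  · rw [← hlogbL]
    exact Nat.floor_le hlogb0
  · rw [← hlogbL]
    linarith [Nat.lt_floor_add_one (Real.logb 2 ε⁻¹)]

lemma tendsto_L : Tendsto (fun ε : ℝ => Real.log (1 / ε)) (𝓝[>] (0:ℝ)) atTop := by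
  have h1 : Tendsto (fun ε : ℝ => 1 / ε) (𝓝[>] (0:ℝ)) atTop := by
    simpa [one_div] using tendsto_inv_nhdsGT_zero (𝕜 := ℝ)
  exact Real.tendsto_log_atTop.comp h1

lemma tendsto_aff (sv C : ℝ) :
    Tendsto (fun ε : ℝ => sv + C * (Real.log (1 / ε))⁻¹) (𝓝[>] (0:ℝ)) (𝓝 sv) := by
  have h := tendsto_L.inv_tendsto_atTop
  have h2 := h.const_mul C
  have h3 := Tendsto.add
    (tendsto_const_nhds : Tendsto (fun _ : ℝ => sv) (𝓝[>] (0:ℝ)) (𝓝 sv)) h2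
  simpa using h3

lemma limsup_liminf_eq {F : ℝ → EReal} {sv : ℝ} {g1 g2 : ℝ → ℝ}
    (h1 : ∀ᶠ ε in 𝓝[>] (0:ℝ), ((g1 ε : ℝ) : EReal) ≤ F ε)
    (h2 : ∀ᶠ ε in 𝓝[>] (0:ℝ), F ε ≤ ((g2 ε : ℝ) : EReal))
    (t1 : Tendsto g1 (𝓝[>] (0:ℝ)) (𝓝 sv)) (t2 : Tendsto g2 (𝓝[>] (0:ℝ)) (𝓝 sv)) :
    limsup F (𝓝[>] (0:ℝ)) = (sv : EReal) ∧ liminf F (𝓝[>] (0:ℝ)) = (sv : EReal) := by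
  have ht1 : Tendsto (fun ε => ((g1 ε : ℝ) : EReal)) (𝓝[>] (0:ℝ)) (𝓝 (sv : EReal)) :=
    EReal.tendsto_coe.2 t1
  have ht2 : Tendsto (fun ε => ((g2 ε : ℝ) : EReal)) (𝓝[>] (0:ℝ)) (𝓝 (sv : EReal)) :=
    EReal.tendsto_coe.2 t2
  have hup : limsup F (𝓝[>] (0:ℝ)) ≤ (sv : EReal) := by
    calc limsup F (𝓝[>] (0:ℝ)) ≤ limsup (fun ε => ((g2 ε : ℝ) : EReal)) (𝓝[>] (0:ℝ)) :=
      limsup_le_limsup h2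
    _ = (sv : EReal) := ht2.limsup_eq
  have hlo : (sv : EReal) ≤ liminf F (𝓝[>] (0:ℝ)) := by
    calc (sv : EReal) = liminf (fun ε => ((g1 ε : ℝ) : EReal)) (𝓝[>] (0:ℝ)) := ht1.liminf_eq.symm
    _ ≤ liminf F (𝓝[>] (0:ℝ)) := liminf_le_liminf h1
  have hlile : liminf F (𝓝[>] (0:ℝ)) ≤ limsup F (𝓝[>] (0:ℝ)) := liminf_le_limsup
  exact ⟨le_antisymm hup (le_trans hlo hlile), le_antisymm (le_trans hlile hup) hlo⟩

lemma ratio_sandwich {L A sv C : ℝ} (hL : 0 < L) (h : sv * L + C ≤ A) :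
    sv + C * L⁻¹ ≤ A * L⁻¹ := by
  have he : sv + C * L⁻¹ = (sv * L + C) * L⁻¹ := by field_simp
  rw [he]
  exact mul_le_mul_of_nonneg_right h (le_of_lt (inv_pos.2 hL))

lemma ratio_sandwich' {L A sv C : ℝ} (hL : 0 < L) (h : A ≤ sv * L + C) :
    A * L⁻¹ ≤ sv + C * L⁻¹ := by
  have he : sv + C * L⁻¹ = (sv * L + C) * L⁻¹ := by field_simp
  rw [he]
  exact mul_le_mul_of_nonneg_right h (le_of_lt (inv_pos.2 hL))

/-! ### The dimension computations -/

lemma minkowski_dims {d : ℕ} {s : ℝ} (hs : 0 ≤ s) (hsd : s ≤ (d : ℝ)) :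
    minkowskiDim (mmu d s) = (s : EReal) := by
  have hlog2 : (0:ℝ) < Real.log 2 := Real.log_pos one_lt_two
  have hev : ∀ᶠ ε in 𝓝[>] (0:ℝ),
      ((s + (-((3*s+1) * Real.log 2)) * (Real.log (1/ε))⁻¹ : ℝ) : EReal)
        ≤ dimRatio (coverN ε (msupport (mmu d s))) ε ∧
      dimRatio (coverN ε (msupport (mmu d s))) ε
        ≤ ((s + (s * Real.log 2) * (Real.log (1/ε))⁻¹ : ℝ) : EReal) := by
    filter_upwards [Ioc_mem_nhdsGT_of_mem (α := ℝ) (a := 1/4) (b := 0) (c := 0)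
      ⟨le_refl 0, by norm_num⟩] with ε hε
    obtain ⟨hε0, hε14⟩ := hε
    obtain ⟨n, hn2, hεle, hεge, hnle, hnge, hL⟩ := scale_facts hε0 hε14
    obtain ⟨m, rfl⟩ : ∃ m, n = m + 2 := ⟨n - 2, by omega⟩
    have hmp : (0:ℝ) < 2 ^ m := by positivity
    have hlow : ((2 ^ (mf s m) : ℕ) : ℕ∞) ≤ coverN ε (msupport (mmu d s)) := by
      apply coverN_msupport_lower hs hsd m (le_of_lt hε0)
      have he : ((2:ℝ) ^ (m+2))⁻¹ = ((2:ℝ) ^ m)⁻¹ / 4 := by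
        rw [pow_add, mul_inv]
        norm_num
        ring
      calc 2 * ε ≤ 2 * (((2:ℝ) ^ m)⁻¹ / 4) := by rw [← he]; linarith
      _ < ((2:ℝ) ^ m)⁻¹ := by
        have : 0 < ((2:ℝ) ^ m)⁻¹ := by positivity
        linarith
    have hup : coverN ε (msupport (mmu d s)) ≤ ((2 ^ (mf s (m + 3)) : ℕ) : ℕ∞) :=
      coverN_msupport_le d hs (m+3) hεge
    have hb := dimRatio_between _ _ _ Nat.one_le_two_pow hlow hup ε hε0 (by linarith)
    constructor
    · refine le_trans ?_ hb.1
      rw [EReal.coe_le_coe_iff]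
      have hA : s * Real.log (1/ε) + (-((3*s+1) * Real.log 2))
          ≤ Real.log (((2 ^ (mf s m) : ℕ) : ℝ)) := by
        push_cast
        rw [Real.log_pow]
        have h1 : s * (m:ℝ) - 1 < (mf s m : ℝ) := mf_gt s m
        have h2 : Real.log (1/ε) / Real.log 2 - 3 ≤ (m:ℝ) := by
          push_cast at hnge
          linarith
        have e1 : (s * (m:ℝ) - 1) * Real.log 2 ≤ (mf s m : ℝ) * Real.log 2 :=
          mul_le_mul_of_nonneg_right (le_of_lt h1) hlog2.le
        have e2 : s * (Real.log (1/ε) / Real.log 2 - 3) ≤ s * m :=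
          mul_le_mul_of_nonneg_left h2 hs
        have e3 : (s * (Real.log (1/ε) / Real.log 2 - 3)) * Real.log 2 ≤ (s * m) * Real.log 2 :=
          mul_le_mul_of_nonneg_right e2 hlog2.le
        have e4 : (s * (Real.log (1/ε) / Real.log 2 - 3)) * Real.log 2
            = s * Real.log (1/ε) - 3 * s * Real.log 2 := by
          field_simp
        nlinarith [e1, e3, e4]
      exact ratio_sandwich hL hA
    · refine le_trans hb.2 ?_
      rw [EReal.coe_le_coe_iff]
      have hA : Real.log (((2 ^ (mf s (m+3)) : ℕ) : ℝ))
          ≤ s * Real.log (1/ε) + s * Real.log 2 := by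
        push_cast
        rw [Real.log_pow]
        have h1 : (mf s (m+3) : ℝ) ≤ s * ((m:ℝ) + 3) := by
          have := mf_le hs (m+3)
          push_cast at this
          linarith
        have h2 : (m:ℝ) + 2 ≤ Real.log (1/ε) / Real.log 2 := by
          push_cast at hnle
          linarith
        have e1 : (mf s (m+3) : ℝ) * Real.log 2 ≤ (s * ((m:ℝ) + 3)) * Real.log 2 :=
          mul_le_mul_of_nonneg_right h1 hlog2.le
        have e2 : s * ((m:ℝ) + 3) ≤ s * (Real.log (1/ε) / Real.log 2 + 1) :=
          mul_le_mul_of_nonneg_left (by linarith) hs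
        have e3 : (s * ((m:ℝ) + 3)) * Real.log 2
            ≤ (s * (Real.log (1/ε) / Real.log 2 + 1)) * Real.log 2 :=
          mul_le_mul_of_nonneg_right e2 hlog2.le
        have e4 : (s * (Real.log (1/ε) / Real.log 2 + 1)) * Real.log 2
            = s * Real.log (1/ε) + s * Real.log 2 := by
          field_simp
        nlinarith [e1, e3, e4]
      exact ratio_sandwich' hL hA
  exact (limsup_liminf_eq (hev.mono fun ε h => h.1) (hev.mono fun ε h => h.2)
    (tendsto_aff s _) (tendsto_aff s _)).1

lemma measTau_dims {d : ℕ} {s : ℝ} (hs : 0 ≤ s) (hsd : s ≤ (d : ℝ)) {τ : ℝ}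
    (hτ0 : 0 ≤ τ) (hτ1 : τ < 1) :
    liminf (fun ε : ℝ => dimRatio (measCoverN (mmu d s) ε τ) ε) (𝓝[>] (0:ℝ)) = (s : EReal) := by
  have hlog2 : (0:ℝ) < Real.log 2 := Real.log_pos one_lt_two
  have h1τ : (0:ℝ) < 1 - τ := by linarith
  have hev : ∀ᶠ ε in 𝓝[>] (0:ℝ),
      ((s + (Real.log (1-τ) - d * Real.log 5 - (s+1) * Real.log 2) * (Real.log (1/ε))⁻¹ : ℝ)
          : EReal)
        ≤ dimRatio (measCoverN (mmu d s) ε τ) ε ∧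
      dimRatio (measCoverN (mmu d s) ε τ) ε
        ≤ ((s + (s * Real.log 2) * (Real.log (1/ε))⁻¹ : ℝ) : EReal) := by
    filter_upwards [Ioc_mem_nhdsGT_of_mem (α := ℝ) (a := 1/4) (b := 0) (c := 0)
      ⟨le_refl 0, by norm_num⟩] with ε hε
    obtain ⟨hε0, hε14⟩ := hε
    obtain ⟨n, hn2, hεle, hεge, hnle, hnge, hL⟩ := scale_facts hε0 hε14
    have hxpos : (0:ℝ) < (1 - τ) * 2 ^ (mf s n) / 5 ^ d := by positivity
    have hlow : ((⌈(1 - τ) * 2 ^ (mf s n) / 5 ^ d⌉₊ : ℕ) : ℕ∞) ≤ measCoverN (mmu d s) ε τ :=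
      measCoverN_lower hs hsd n hε0 hεle
    have hup : measCoverN (mmu d s) ε τ ≤ ((2 ^ (mf s (n + 1)) : ℕ) : ℕ∞) :=
      measCoverN_le_pow d hs (n+1) hτ0 hεge
    have hb := dimRatio_between _ _ _ (Nat.one_le_ceil_iff.2 hxpos) hlow hup ε hε0 (by linarith)
    constructor
    · refine le_trans ?_ hb.1
      rw [EReal.coe_le_coe_iff]
      have hA : s * Real.log (1/ε) + (Real.log (1-τ) - d * Real.log 5 - (s+1) * Real.log 2)
          ≤ Real.log ((⌈(1 - τ) * 2 ^ (mf s n) / 5 ^ d⌉₊ : ℕ) : ℝ) := by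
        have hle : (1 - τ) * 2 ^ (mf s n) / 5 ^ d
            ≤ ((⌈(1 - τ) * 2 ^ (mf s n) / 5 ^ d⌉₊ : ℕ) : ℝ) := Nat.le_ceil _
        have hlog1 : Real.log ((1 - τ) * 2 ^ (mf s n) / 5 ^ d)
            ≤ Real.log ((⌈(1 - τ) * 2 ^ (mf s n) / 5 ^ d⌉₊ : ℕ) : ℝ) :=
          Real.log_le_log hxpos hle
        have hlogx : Real.log ((1 - τ) * 2 ^ (mf s n) / 5 ^ d)
            = Real.log (1-τ) + (mf s n : ℝ) * Real.log 2 - (d:ℝ) * Real.log 5 := by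
          rw [Real.log_div (ne_of_gt (by positivity)) (ne_of_gt (by positivity)),
            Real.log_mul (ne_of_gt (by positivity)) (ne_of_gt (by positivity)),
            Real.log_pow, Real.log_pow]
        have h1 : s * (n:ℝ) - 1 < (mf s n : ℝ) := mf_gt s n
        have h2 : Real.log (1/ε) / Real.log 2 - 1 ≤ (n:ℝ) := hnge
        have e1 : (s * (n:ℝ) - 1) * Real.log 2 ≤ (mf s n : ℝ) * Real.log 2 :=
          mul_le_mul_of_nonneg_right (le_of_lt h1) hlog2.le
        have e2 : s * (Real.log (1/ε) / Real.log 2 - 1) ≤ s * n :=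
          mul_le_mul_of_nonneg_left h2 hs
        have e3 : (s * (Real.log (1/ε) / Real.log 2 - 1)) * Real.log 2 ≤ (s * n) * Real.log 2 :=
          mul_le_mul_of_nonneg_right e2 hlog2.le
        have e4 : (s * (Real.log (1/ε) / Real.log 2 - 1)) * Real.log 2
            = s * Real.log (1/ε) - s * Real.log 2 := by
          field_simp
        nlinarith [e1, e3, e4, hlog1, hlogx]
      exact ratio_sandwich hL hA
    · refine le_trans hb.2 ?_
      rw [EReal.coe_le_coe_iff]
      have hA : Real.log (((2 ^ (mf s (n+1)) : ℕ) : ℝ))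
          ≤ s * Real.log (1/ε) + s * Real.log 2 := by
        push_cast
        rw [Real.log_pow]
        have h1 : (mf s (n+1) : ℝ) ≤ s * ((n:ℝ) + 1) := by
          have := mf_le hs (n+1)
          push_cast at this
          linarith
        have h2 : (n:ℝ) ≤ Real.log (1/ε) / Real.log 2 := hnle
        have e1 : (mf s (n+1) : ℝ) * Real.log 2 ≤ (s * ((n:ℝ) + 1)) * Real.log 2 :=
          mul_le_mul_of_nonneg_right h1 hlog2.le
        have e2 : s * ((n:ℝ) + 1) ≤ s * (Real.log (1/ε) / Real.log 2 + 1) :=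
          mul_le_mul_of_nonneg_left (by linarith) hs
        have e3 : (s * ((n:ℝ) + 1)) * Real.log 2
            ≤ (s * (Real.log (1/ε) / Real.log 2 + 1)) * Real.log 2 :=
          mul_le_mul_of_nonneg_right e2 hlog2.le
        have e4 : (s * (Real.log (1/ε) / Real.log 2 + 1)) * Real.log 2
            = s * Real.log (1/ε) + s * Real.log 2 := by
          field_simp
        nlinarith [e1, e3, e4]
      exact ratio_sandwich' hL hA
  exact (limsup_liminf_eq (hev.mono fun ε h => h.1) (hev.mono fun ε h => h.2)
    (tendsto_aff s _) (tendsto_aff s _)).2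

lemma lowerW_dims {d : ℕ} {s : ℝ} (hs : 0 ≤ s) (hsd : s ≤ (d : ℝ)) :
    lowerWDim (mmu d s) = (s : EReal) := by
  unfold lowerWDim
  have hev : ∀ᶠ τ in 𝓝[>] (0:ℝ),
      liminf (fun ε : ℝ => dimRatio (measCoverN (mmu d s) ε τ) ε) (𝓝[>] (0:ℝ))
        = ((s : EReal)) := by
    filter_upwards [Ioo_mem_nhdsGT_of_mem (α := ℝ) (a := 1) (b := 0) (c := 0)
      ⟨le_refl 0, one_pos⟩] with τ hτ
    exact measTau_dims hs hsd (le_of_lt hτ.1) hτ.2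
  rw [limsup_congr hev]
  exact limsup_const _

end AuxWD

/-- For every `d ∈ ℕ` and every real `d⋆ ∈ [0, d]` there exists a Borel
probability measure `μ⋆` on `[0,1]^d` with `d_*(μ⋆) = dim_M(μ⋆) = d⋆`. -/
theorem exists_measure_lowerWDim_eq_minkowskiDim
    (d : ℕ) (dstar : ℝ) (h0 : 0 ≤ dstar) (hd : dstar ≤ (d : ℝ)) :
    ∃ μ : Measure (Fin d → ℝ), IsProbabilityMeasure μ ∧ μ (Set.Icc 0 1) = 1 ∧
      lowerWDim μ = (dstar : EReal) ∧ minkowskiDim μ = (dstar : EReal) :=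
  ⟨AuxWD.mmu d dstar, AuxWD.mmu_prob d dstar, AuxWD.mmu_Icc d dstar,
    AuxWD.lowerW_dims h0 hd, AuxWD.minkowski_dims h0 hd⟩
end

section
/- Let μ be the Borel probability measure on ℝ^d (equipped with the ℓ∞ metric) that assigns mass μ({(n_1, …, n_d)}) = 2^{-(n_1 + ⋯ + n_d)} to each point (n_1, …, n_d) with n_1, …, n_d positive integers. Then for every α > 0, the α-entropic dimension of μ equals 0 and the α-upper Wasserstein dimension of μ equals 2α: d̄_α(μ) = 0 and d*_α(μ) = 2α. -/
open Filter Topology MeasureTheory Set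
open scoped ENNReal NNReal

open Filter Topology MeasureTheory Set
open scoped ENNReal

noncomputable section AuxProofs

open Filter Topology MeasureTheory Set
open scoped ENNReal

private lemma aux_coverN_le_card {X : Type*} [PseudoMetricSpace X] {ε : ℝ} (hε : 0 ≤ ε)
    (t : Finset X) : coverN ε (↑t : Set X) ≤ (t.card : ℕ∞) :=
  iInf_le_of_le t (iInf_le_of_le (fun x hx =>
    Set.mem_biUnion hx (Metric.mem_closedBall_self hε)) le_rfl)

private lemma aux_measCoverN_le {X : Type*} [PseudoMetricSpace X] [MeasurableSpace X]
    (μ : Measure X) (ε τ : ℝ) {S : Set X} (hS : MeasurableSet S)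
    (hm : ENNReal.ofReal (1 - τ) ≤ μ S) : measCoverN μ ε τ ≤ coverN ε S :=
  iInf_le_of_le S (iInf_le_of_le hS (iInf_le _ hm))

private lemma aux_one_le_measCoverN {X : Type*} [PseudoMetricSpace X] [MeasurableSpace X]
    (μ : Measure X) (ε τ : ℝ) (hτ : τ < 1) : 1 ≤ measCoverN μ ε τ := by
  refine le_iInf fun S => le_iInf fun _ => le_iInf fun hm => le_iInf fun t => le_iInf fun hcov => ?_
  have hSne : S.Nonempty := by
    rcases S.eq_empty_or_nonempty with h | h
    · exfalso
      rw [h, measure_empty] at hm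
      exact absurd (le_antisymm hm zero_le) (ENNReal.ofReal_pos.2 (by linarith)).ne'
    · exact h
  obtain ⟨x, hx⟩ := hSne
  obtain ⟨y, hyt, -⟩ := Set.mem_iUnion₂.1 (hcov hx)
  exact_mod_cast Nat.one_le_iff_ne_zero.2 (Finset.card_pos.2 ⟨y, hyt⟩).ne'

private lemma aux_dimRatio_bounds {N : ℕ∞} {m : ℕ} (hN1 : 1 ≤ N) (hNm : N ≤ (m : ℕ∞))
    {ε : ℝ} (hε : 0 < ε) (hε1 : ε < 1) :
    0 ≤ dimRatio N ε ∧
      dimRatio N ε ≤ ((Real.log m * (Real.log (1 / ε))⁻¹ : ℝ) : EReal) := by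
  lift N to ℕ using (hNm.trans_lt (WithTop.coe_lt_top m)).ne
  have hn1 : 1 ≤ N := by exact_mod_cast hN1
  have hnm : N ≤ m := by exact_mod_cast hNm
  have hL : 0 < Real.log (1 / ε) := Real.log_pos ((one_lt_div hε).mpr hε1)
  have h0 : ((N : ℕ∞) : ℝ≥0∞) ≠ 0 := by
    rw [ENat.toENNReal_coe]
    exact_mod_cast (Nat.pos_of_ne_zero (by omega)).ne'
  have htop : ((N : ℕ∞) : ℝ≥0∞) ≠ ⊤ := by
    rw [ENat.toENNReal_coe]
    exact ENNReal.natCast_ne_top N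
  have helog : elog ((N : ℕ∞) : ℝ≥0∞) = ((Real.log N : ℝ) : EReal) := by
    rw [elog, if_neg h0, if_neg htop, ENat.toENNReal_coe]
    simp
  have hdim : dimRatio (N : ℕ∞) ε = ((Real.log N * (Real.log (1 / ε))⁻¹ : ℝ) : EReal) := by
    rw [dimRatio, helog, ← EReal.coe_mul]
  constructor
  · rw [hdim]
    exact_mod_cast mul_nonneg (Real.log_natCast_nonneg N) (inv_nonneg.2 hL.le)
  · rw [hdim]
    exact_mod_cast mul_le_mul_of_nonneg_right
      (Real.log_le_log (by exact_mod_cast hn1) (by exact_mod_cast hnm)) (inv_nonneg.2 hL.le)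

private lemma aux_geom (K : ℕ) :
    ∑ j ∈ Finset.range K, ((1:ℝ)/2) ^ (j+1) = 1 - (1/2 : ℝ) ^ K := by
  induction K with
  | zero => simp
  | succ k ih => rw [Finset.sum_range_succ, ih]; ring

private lemma aux_grid (d : ℕ) (μ : Measure (Fin d → ℝ))
    (hμ : ∀ n : Fin d → ℕ, (∀ i, 0 < n i) →
      μ ({fun i => (n i : ℝ)} : Set (Fin d → ℝ)) = (2 : ℝ≥0∞)⁻¹ ^ (∑ i, n i)) (K : ℕ) :
    ENNReal.ofReal (1 - d * (1/2 : ℝ) ^ K) ≤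
      μ ↑((Fintype.piFinset fun _ : Fin d => Finset.range K).image
          fun n : Fin d → ℕ => fun i => ((n i : ℝ) + 1)) := by
  set T := (Fintype.piFinset fun _ : Fin d => Finset.range K).image
      fun n : Fin d → ℕ => fun i => ((n i : ℝ) + 1) with hT
  have hsum : ∑ x ∈ T, μ {x} = μ ↑T := by
    have hd : (↑T : Set (Fin d → ℝ)).PairwiseDisjoint (fun x => ({x} : Set (Fin d → ℝ))) :=
      fun x _ y _ hxy => Set.disjoint_singleton.2 hxy
    calc ∑ x ∈ T, μ {x} = μ (⋃ x ∈ T, {x}) :=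
          (measure_biUnion_finset hd fun b _ => measurableSet_singleton b).symm
      _ = μ ↑T := by congr 1; ext y; simp
  have hsum2 : ∑ x ∈ T, μ {x}
      = ∑ n ∈ Fintype.piFinset (fun _ : Fin d => Finset.range K),
          μ {fun i => ((n i : ℝ) + 1)} := by
    refine Finset.sum_image fun a _ b _ h => ?_
    funext i
    have h2 : (a i : ℝ) + 1 = (b i : ℝ) + 1 := congrFun h i
    exact_mod_cast (by linarith : (a i : ℝ) = b i)
  have hpt : ∀ n : Fin d → ℕ,
      μ {fun i => ((n i : ℝ) + 1)} = ∏ i, (2 : ℝ≥0∞)⁻¹ ^ (n i + 1) := by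
    intro n
    have h1 : (fun i => ((n i : ℝ) + 1)) = (fun i => ((n i + 1 : ℕ) : ℝ)) := by
      funext i; push_cast; ring
    rw [h1, hμ (fun i => n i + 1) (fun i => Nat.succ_pos _), ← Finset.prod_pow_eq_pow_sum]
  have hprod : ∑ n ∈ Fintype.piFinset (fun _ : Fin d => Finset.range K),
      ∏ i, (2 : ℝ≥0∞)⁻¹ ^ (n i + 1)
      = (∑ j ∈ Finset.range K, (2 : ℝ≥0∞)⁻¹ ^ (j + 1)) ^ d := by
    have h := Finset.prod_univ_sum (fun _ : Fin d => Finset.range K)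
      (fun _ j => (2 : ℝ≥0∞)⁻¹ ^ (j + 1))
    rw [← h]
    simp [Finset.prod_const]
  have hhalf : (2 : ℝ≥0∞)⁻¹ = ENNReal.ofReal (1/2 : ℝ) := by
    rw [show ((1:ℝ)/2) = (2:ℝ)⁻¹ by norm_num, ENNReal.ofReal_inv_of_pos (by norm_num)]
    norm_num
  have hgeom : ∑ j ∈ Finset.range K, (2 : ℝ≥0∞)⁻¹ ^ (j + 1)
      = ENNReal.ofReal (1 - (1/2 : ℝ) ^ K) := by
    rw [← aux_geom K, ENNReal.ofReal_sum_of_nonneg (fun j _ => by positivity)]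
    refine Finset.sum_congr rfl fun j _ => ?_
    rw [hhalf, ← ENNReal.ofReal_pow (by norm_num)]
  have hbound : (1/2 : ℝ) ^ K ≤ 1 := pow_le_one₀ (by norm_num) (by norm_num)
  have hbern : (1 : ℝ) - d * (1/2) ^ K ≤ (1 - (1/2 : ℝ) ^ K) ^ d := by
    have h := one_add_mul_le_pow (show (-2 : ℝ) ≤ -((1/2 : ℝ) ^ K) by linarith) d
    calc (1 : ℝ) - d * (1/2) ^ K = 1 + d * (-((1/2 : ℝ) ^ K)) := by ring
      _ ≤ (1 + -((1/2 : ℝ) ^ K)) ^ d := h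
      _ = (1 - (1/2 : ℝ) ^ K) ^ d := by ring_nf
  calc ENNReal.ofReal (1 - d * (1/2 : ℝ) ^ K)
      ≤ ENNReal.ofReal ((1 - (1/2 : ℝ) ^ K) ^ d) := ENNReal.ofReal_le_ofReal hbern
    _ = (ENNReal.ofReal (1 - (1/2 : ℝ) ^ K)) ^ d := ENNReal.ofReal_pow (by linarith) d
    _ = (∑ j ∈ Finset.range K, (2 : ℝ≥0∞)⁻¹ ^ (j + 1)) ^ d := by rw [hgeom]
    _ = ∑ n ∈ Fintype.piFinset (fun _ : Fin d => Finset.range K),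
          ∏ i, (2 : ℝ≥0∞)⁻¹ ^ (n i + 1) := hprod.symm
    _ = ∑ n ∈ Fintype.piFinset (fun _ : Fin d => Finset.range K),
          μ {fun i => ((n i : ℝ) + 1)} :=
        Finset.sum_congr rfl fun n _ => (hpt n).symm
    _ = ∑ x ∈ T, μ {x} := hsum2.symm
    _ ≤ μ ↑T := hsum.le

private lemma aux_card (d K : ℕ) :
    ((Fintype.piFinset fun _ : Fin d => Finset.range K).image
        fun n : Fin d → ℕ => fun i => ((n i : ℝ) + 1)).card ≤ K ^ d := by
  refine (Finset.card_image_le).trans ?_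
  rw [Fintype.card_piFinset]
  simp

private lemma aux_main {d : ℕ} (μ : Measure (Fin d → ℝ)) [IsProbabilityMeasure μ]
    (hμ : ∀ n : Fin d → ℕ, (∀ i, 0 < n i) →
      μ ({fun i => (n i : ℝ)} : Set (Fin d → ℝ)) = (2 : ℝ≥0∞)⁻¹ ^ (∑ i, n i))
    {γ : ℝ} (hγ : 0 < γ) :
    Tendsto (fun ε : ℝ => dimRatio (measCoverN μ ε (ε ^ γ)) ε) (𝓝[>] (0 : ℝ))
      (𝓝 (0 : EReal)) := by
  have hD1 : (1 : ℝ) ≤ max (d : ℝ) 1 := le_max_right _ _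
  have hD0 : (0 : ℝ) < max (d : ℝ) 1 := lt_of_lt_of_le one_pos hD1
  set D : ℝ := max (d : ℝ) 1 with hD
  have hlog2 : (0 : ℝ) < Real.log 2 := Real.log_pos one_lt_two
  set b : ℝ := γ / Real.log 2 with hb
  set c : ℝ := Real.log D / Real.log 2 + 2 with hc
  have hb0 : 0 < b := div_pos hγ hlog2
  have hc2 : (2 : ℝ) ≤ c := by
    have : 0 ≤ Real.log D / Real.log 2 := div_nonneg (Real.log_nonneg hD1) hlog2.le
    rw [hc]; linarith
  set K : ℝ → ℕ := fun ε => ⌈Real.logb 2 (D * (1/ε) ^ γ)⌉₊ + 1 with hK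
  have hmem : ∀ᶠ ε in 𝓝[>] (0:ℝ), ε ∈ Ioo (0:ℝ) 1 :=
    by filter_upwards [Ioo_mem_nhdsGT zero_lt_one] with ε h; exact h
  have hLt : Tendsto (fun ε : ℝ => Real.log (1/ε)) (𝓝[>] (0:ℝ)) atTop := by
    have h2 : Tendsto (fun ε : ℝ => -Real.log ε) (𝓝[>] (0:ℝ)) atTop :=
      tendsto_neg_atBot_atTop.comp Real.tendsto_log_nhdsGT_zero
    refine h2.congr fun ε => ?_
    rw [one_div, Real.log_inv]
  have hKfacts : ∀ ε ∈ Ioo (0:ℝ) 1,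
      measCoverN μ ε (ε ^ γ) ≤ ((K ε) ^ d : ℕ) ∧
        ((K ε : ℝ) ≤ b * Real.log (1/ε) + c) := by
    intro ε hε
    obtain ⟨hε0, hε1⟩ := hε
    have hinv1 : (1:ℝ) ≤ 1/ε := by rw [le_div_iff₀ hε0]; linarith
    have hrp : (0:ℝ) < (1/ε) ^ γ := Real.rpow_pos_of_pos (by positivity) γ
    have hrp1 : (1:ℝ) ≤ (1/ε) ^ γ := Real.one_le_rpow hinv1 hγ.le
    have hX1 : (1:ℝ) ≤ D * (1/ε) ^ γ := by nlinarith
    have hX0 : (0:ℝ) < D * (1/ε) ^ γ := by positivity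
    have hlogbX : 0 ≤ Real.logb 2 (D * (1/ε) ^ γ) := Real.logb_nonneg one_lt_two hX1
    have hlogb_eq : Real.logb 2 (D * (1/ε) ^ γ)
        = (Real.log D + γ * Real.log (1/ε)) / Real.log 2 := by
      rw [Real.logb, Real.log_mul hD0.ne' hrp.ne', Real.log_rpow (by positivity)]
    have hexp : (Real.log D + γ * Real.log (1/ε)) / Real.log 2
        = b * Real.log (1/ε) + (c - 2) := by
      rw [hb, hc]; field_simp; ring
    have hKeq : (K ε : ℝ) = (⌈Real.logb 2 (D * (1/ε) ^ γ)⌉₊ : ℝ) + 1 := by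
      rw [hK]; push_cast; ring
    have key2 : (K ε : ℝ) ≤ b * Real.log (1/ε) + c := by
      have h1 : (⌈Real.logb 2 (D * (1/ε) ^ γ)⌉₊ : ℝ) < Real.logb 2 (D * (1/ε) ^ γ) + 1 :=
        Nat.ceil_lt_add_one hlogbX
      rw [hKeq]; linarith [h1, hlogb_eq.trans hexp]
    have key1 : D * (1/2 : ℝ) ^ (K ε) ≤ ε ^ γ := by
      have h1 : Real.logb 2 (D * (1/ε) ^ γ) ≤ (K ε : ℝ) := by
        have := Nat.le_ceil (Real.logb 2 (D * (1/ε) ^ γ))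
        rw [hKeq]; linarith
      have h2 : D * (1/ε) ^ γ ≤ (2:ℝ) ^ (K ε : ℝ) := by
        calc D * (1/ε) ^ γ = (2:ℝ) ^ Real.logb 2 (D * (1/ε) ^ γ) :=
              (Real.rpow_logb two_pos (by norm_num) hX0).symm
          _ ≤ (2:ℝ) ^ (K ε : ℝ) := (Real.rpow_le_rpow_left_iff one_lt_two).2 h1
      rw [Real.rpow_natCast] at h2
      have h2K : (0:ℝ) < 2 ^ (K ε) := by positivity
      have hεγ : ε ^ γ = ((1/ε) ^ γ)⁻¹ := by
        rw [one_div, Real.inv_rpow hε0.le, inv_inv]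
      have goal2 : D * ((2:ℝ) ^ (K ε))⁻¹ ≤ ((1/ε) ^ γ)⁻¹ := by
        rw [← div_eq_mul_inv, show ((1/ε : ℝ) ^ γ)⁻¹ = 1 / ((1/ε) ^ γ) from (one_div _).symm,
          div_le_div_iff₀ h2K hrp]
        nlinarith
      calc D * (1/2 : ℝ) ^ (K ε) = D * ((2:ℝ) ^ (K ε))⁻¹ := by rw [one_div, inv_pow]
        _ ≤ ((1/ε) ^ γ)⁻¹ := goal2
        _ = ε ^ γ := hεγ.symm
    have hmass : ENNReal.ofReal (1 - ε ^ γ) ≤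
        μ ↑((Fintype.piFinset fun _ : Fin d => Finset.range (K ε)).image
            fun n : Fin d → ℕ => fun i => ((n i : ℝ) + 1)) := by
      refine le_trans (ENNReal.ofReal_le_ofReal ?_) (aux_grid d μ hμ (K ε))
      have hdD : (d:ℝ) * (1/2 : ℝ) ^ (K ε) ≤ D * (1/2 : ℝ) ^ (K ε) :=
        mul_le_mul_of_nonneg_right (le_max_left _ _) (by positivity)
      linarith
    have hcover : measCoverN μ ε (ε ^ γ) ≤ ((K ε) ^ d : ℕ) := by
      refine le_trans (aux_measCoverN_le μ ε (ε ^ γ) (Finset.measurableSet _) hmass) ?_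
      refine le_trans (aux_coverN_le_card hε0.le _) ?_
      exact_mod_cast aux_card d (K ε)
    exact ⟨hcover, key2⟩
  have hbounds : ∀ᶠ ε in 𝓝[>] (0:ℝ),
      (0 : EReal) ≤ dimRatio (measCoverN μ ε (ε ^ γ)) ε ∧
      dimRatio (measCoverN μ ε (ε ^ γ)) ε ≤
        ((Real.log (((K ε) ^ d : ℕ) : ℝ) * (Real.log (1/ε))⁻¹ : ℝ) : EReal) := by
    filter_upwards [hmem] with ε hε
    exact aux_dimRatio_bounds
      (aux_one_le_measCoverN μ ε (ε ^ γ) (Real.rpow_lt_one hε.1.le hε.2 hγ))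
      (hKfacts ε hε).1 hε.1 hε.2
  set g : ℝ → ℝ := fun ε => Real.log (((K ε) ^ d : ℕ) : ℝ) * (Real.log (1/ε))⁻¹ with hg
  have hg0 : ∀ᶠ ε in 𝓝[>] (0:ℝ), 0 ≤ g ε := by
    filter_upwards [hmem] with ε hε
    have h1 : (1:ℝ) ≤ (((K ε) ^ d : ℕ) : ℝ) := by
      exact_mod_cast Nat.one_le_iff_ne_zero.2
        (pow_ne_zero d (Nat.one_le_iff_ne_zero.1 (Nat.le_add_left 1 _)))
    have h2 : (1:ℝ) ≤ 1/ε := by rw [le_div_iff₀ hε.1]; linarith [hε.2]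
    exact mul_nonneg (Real.log_nonneg h1) (inv_nonneg.2 (Real.log_nonneg h2))
  have hgle : ∀ᶠ ε in 𝓝[>] (0:ℝ),
      g ε ≤ (d * (Real.log (b + c) + Real.log (Real.log (1/ε)))) * (Real.log (1/ε))⁻¹ := by
    filter_upwards [hmem, hLt.eventually_ge_atTop 1] with ε hε hL1
    have hK1 : 1 ≤ K ε := Nat.le_add_left 1 _
    have hlogK : Real.log (((K ε) ^ d : ℕ) : ℝ) = d * Real.log (K ε) := by
      push_cast
      rw [Real.log_pow]
    have hKb : (K ε : ℝ) ≤ (b + c) * Real.log (1/ε) := by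
      have h := (hKfacts ε hε).2
      have hcc : (0:ℝ) ≤ c * (Real.log (1/ε) - 1) :=
        mul_nonneg (by linarith) (by linarith)
      nlinarith
    have hlogle : Real.log (K ε) ≤ Real.log (b + c) + Real.log (Real.log (1/ε)) := by
      rw [← Real.log_mul (by positivity) (by linarith)]
      exact Real.log_le_log (by exact_mod_cast hK1) hKb
    have hLinv : (0:ℝ) ≤ (Real.log (1/ε))⁻¹ := inv_nonneg.2 (by linarith)
    calc g ε = (d * Real.log (K ε)) * (Real.log (1/ε))⁻¹ := by rw [hg]; simp only []; rw [hlogK]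
      _ ≤ (d * (Real.log (b + c) + Real.log (Real.log (1/ε)))) * (Real.log (1/ε))⁻¹ :=
        mul_le_mul_of_nonneg_right
          (mul_le_mul_of_nonneg_left hlogle (by positivity)) hLinv
  have hup : Tendsto
      (fun ε : ℝ => (d * (Real.log (b + c) + Real.log (Real.log (1/ε)))) * (Real.log (1/ε))⁻¹)
      (𝓝[>] (0:ℝ)) (𝓝 0) := by
    have h1 : Tendsto (fun x : ℝ => (d * (Real.log (b + c) + Real.log x)) * x⁻¹)
        atTop (𝓝 0) := by
      have heq : (fun x : ℝ => (d * (Real.log (b + c) + Real.log x)) * x⁻¹)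
          = fun x => (d * Real.log (b + c)) * x⁻¹ + d * (Real.log x / x) := by
        funext x; rw [div_eq_mul_inv]; ring
      rw [heq]
      have t1 : Tendsto (fun x : ℝ => (d * Real.log (b + c)) * x⁻¹) atTop (𝓝 0) := by
        simpa using tendsto_inv_atTop_zero.const_mul (d * Real.log (b + c))
      have t2 : Tendsto (fun x : ℝ => (d:ℝ) * (Real.log x / x)) atTop (𝓝 0) := by
        simpa using (Real.isLittleO_log_id_atTop.tendsto_div_nhds_zero).const_mul (d:ℝ)
      simpa using t1.add t2
    exact h1.comp hLt
  have hgt : Tendsto g (𝓝[>] (0:ℝ)) (𝓝 0) := squeeze_zero' hg0 hgle hup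
  refine tendsto_of_tendsto_of_tendsto_of_le_of_le' tendsto_const_nhds ?_
    (hbounds.mono fun ε h => h.1) (hbounds.mono fun ε h => h.2)
  simpa only [EReal.coe_zero] using EReal.tendsto_coe.2 hgt

end AuxProofs

/-- Let `μ` be the probability measure on `ℝ^d` with
`μ({(n₁,…,n_d)}) = 2^{-(n₁+⋯+n_d)}` for positive integers `n₁, …, n_d`.  Then for every
`α > 0`, `d̄_α(μ) = 0` and `d*_α(μ) = 2α`. -/
theorem entropicDim_and_upperWDim_of_geometric_grid
    (d : ℕ) (μ : Measure (Fin d → ℝ)) [IsProbabilityMeasure μ]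
    (hμ : ∀ n : Fin d → ℕ, (∀ i, 0 < n i) →
      μ ({fun i => (n i : ℝ)} : Set (Fin d → ℝ)) = (2 : ℝ≥0∞)⁻¹ ^ (∑ i, n i))
    (α : ℝ) (hα : 0 < α) :
    entropicDim μ α = (0 : EReal) ∧ upperWDim μ α = ((2 * α : ℝ) : EReal) := by
  constructor
  · exact (aux_main μ hμ hα).limsup_eq
  · have hmem : ∀ s : ℝ, 2 * α < s → ((s : EReal) ∈
        {x : EReal | ∃ s : ℝ, x = (s : EReal) ∧ 2 * α < s ∧
          limsup (fun ε : ℝ => dimRatio (measCoverN μ ε (ε ^ (s * α / (s - 2 * α)))) ε)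
            (𝓝[>] (0 : ℝ)) ≤ (s : EReal)}) := by
      intro s hs
      refine ⟨s, rfl, hs, ?_⟩
      have hγ : 0 < s * α / (s - 2 * α) :=
        div_pos (mul_pos (by nlinarith) hα) (by linarith)
      rw [(aux_main μ hμ hγ).limsup_eq]
      exact_mod_cast (by nlinarith : (0:ℝ) ≤ s)
    rw [upperWDim]
    apply le_antisymm
    · by_contra hlt
      push_neg at hlt
      obtain ⟨a, ha1, ha2⟩ := EReal.exists_between_coe_real hlt
      exact absurd (sInf_le (hmem a (by exact_mod_cast ha1))) (not_le.2 ha2)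
    · refine le_sInf ?_
      rintro x ⟨s, rfl, hs, -⟩
      exact_mod_cast hs.le
end

section
/- Let β > 0, let ν be a Borel probability measure on ℝ^ℓ, and let G, G̃: ℝ^ℓ → ℝ^d be Borel measurable maps with ∫ ‖G̃(z) − G(z)‖_∞ dν(z) < ∞. Then the β-Hölder integral probability metric between the push-forwards satisfies ‖G̃_♯ν − G_♯ν‖_{H^β(ℝ^d,ℝ,1)} ≤ ( ∫ ‖G̃(z) − G(z)‖_∞ dν(z) )^{min(β,1)}. -/
open Filter Topology MeasureTheory Set
open scoped ENNReal NNReal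

open Filter Topology MeasureTheory Set
open scoped ENNReal


section AuxProof

variable {d : ℕ} {β : ℝ} {f : (Fin d → ℝ) → ℝ}

lemma foldr_pderiv_const (s : Fin d → ℕ) (f : (Fin d → ℝ) → ℝ) (L : List (Fin d))
    (h : ∀ i ∈ L, s i = 0) :
    L.foldr (fun i g => (pderiv' i)^[s i] g) f = f := by
  induction L with
  | nil => rfl
  | cons a L ih =>
    rw [List.foldr_cons, ih (fun i hi => h i (List.mem_cons_of_mem a hi)),
      h a List.mem_cons_self, Function.iterate_zero, id_eq]

lemma mpderiv_zero' (s : Fin d → ℕ) (f : (Fin d → ℝ) → ℝ) (h : ∀ i, s i = 0) :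
    mpderiv s f = f :=
  foldr_pderiv_const s f _ (fun i _ => h i)

lemma mpderiv_single (i : Fin d) (f : (Fin d → ℝ) → ℝ) :
    mpderiv (Pi.single i 1) f = pderiv' i f := by
  unfold mpderiv
  have key : ∀ L : List (Fin d), L.Nodup → i ∈ L →
      L.foldr (fun j g => (pderiv' j)^[(Pi.single i 1 : Fin d → ℕ) j] g) f = pderiv' i f := by
    intro L
    induction L with
    | nil => intro _ h; exact absurd h List.not_mem_nil
    | cons a L ih =>
      intro hnd hmem
      rcases List.mem_cons.1 hmem with h | hmem'
      · subst h
        rw [List.foldr_cons,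
          foldr_pderiv_const _ f L (fun j hj =>
            Pi.single_eq_of_ne (by rintro rfl; exact (List.nodup_cons.1 hnd).1 hj) 1),
          Pi.single_eq_same, Function.iterate_one]
      · have ha : a ≠ i := by rintro rfl; exact (List.nodup_cons.1 hnd).1 hmem'
        rw [List.foldr_cons, Pi.single_eq_of_ne ha 1, Function.iterate_zero, id_eq,
          ih (List.nodup_cons.1 hnd).2 hmem']
  exact key (List.finRange d) (List.nodup_finRange d) (List.mem_finRange i)

lemma holder_bdd (hf : f ∈ HolderClass d β 1) (x : Fin d → ℝ) : ‖f x‖ ≤ 1 := by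
  have h1 : (⨆ x, (‖mpderiv (0 : Fin d → ℕ) f x‖₊ : ℝ≥0∞)) ≤ ENNReal.ofReal 1 := by
    refine le_trans (le_trans ?_ le_self_add) hf.2
    exact ENNReal.le_tsum (⟨0, by simp⟩ : {s : Fin d → ℕ // ∑ i, s i ≤ ⌊β⌋₊})
  rw [mpderiv_zero' 0 f (fun i => rfl), ENNReal.ofReal_one] at h1
  have h2 : (‖f x‖₊ : ℝ≥0∞) ≤ 1 := le_trans (le_iSup (fun x => (‖f x‖₊ : ℝ≥0∞)) x) h1
  have h3 : ‖f x‖₊ ≤ 1 := by exact_mod_cast h2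
  calc ‖f x‖ = (‖f x‖₊ : ℝ) := (coe_nnnorm _).symm
  _ ≤ 1 := by exact_mod_cast h3

lemma holder_holder_lt (hβ0 : 0 < β) (hβ1 : β < 1) (hf : f ∈ HolderClass d β 1)
    (x y : Fin d → ℝ) : ‖f x - f y‖ ≤ dist x y ^ β := by
  rcases eq_or_ne x y with rfl | hxy
  · rw [sub_self, norm_zero]
    exact Real.rpow_nonneg (dist_nonneg (x := x) (y := x)) β
  have hfl : ⌊β⌋₊ = 0 := Nat.floor_eq_zero.2 hβ1
  have h1 : (⨆ (x : Fin d → ℝ) (y : Fin d → ℝ) (_ : x ≠ y),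
      (‖mpderiv (0 : Fin d → ℕ) f x - mpderiv (0 : Fin d → ℕ) f y‖₊ : ℝ≥0∞) /
        (nndist x y : ℝ≥0∞) ^ (β - (⌊β⌋₊ : ℝ))) ≤ ENNReal.ofReal 1 := by
    refine le_trans (le_trans ?_ le_add_self) hf.2
    exact ENNReal.le_tsum (⟨0, by simp [hfl]⟩ : {s : Fin d → ℕ // ∑ i, s i = ⌊β⌋₊})
  rw [mpderiv_zero' 0 f (fun i => rfl), hfl, ENNReal.ofReal_one] at h1
  simp only [iSup_le_iff] at h1
  have h2 := h1 x y hxy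
  rw [Nat.cast_zero, sub_zero] at h2
  have hd0 : (nndist x y : ℝ≥0∞) ≠ 0 := by
    simp only [ne_eq, ENNReal.coe_eq_zero, nndist_eq_zero]
    exact hxy
  have hb0 : (nndist x y : ℝ≥0∞) ^ β ≠ 0 :=
    (ENNReal.rpow_pos (pos_iff_ne_zero.2 hd0) ENNReal.coe_ne_top).ne'
  have hbt : (nndist x y : ℝ≥0∞) ^ β ≠ ⊤ :=
    ENNReal.rpow_ne_top_of_nonneg hβ0.le ENNReal.coe_ne_top
  have h3 : (‖f x - f y‖₊ : ℝ≥0∞) ≤ (nndist x y : ℝ≥0∞) ^ β := by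
    have := (ENNReal.div_le_iff hb0 hbt).1 h2
    rwa [one_mul] at this
  rw [← ENNReal.coe_rpow_of_nonneg _ hβ0.le, ENNReal.coe_le_coe] at h3
  calc ‖f x - f y‖ = (‖f x - f y‖₊ : ℝ) := (coe_nnnorm _).symm
  _ ≤ ((nndist x y : ℝ≥0) ^ β : ℝ≥0) := by exact_mod_cast h3
  _ = dist x y ^ β := by rw [NNReal.coe_rpow, coe_nndist]

lemma holder_lip (hβ1 : 1 ≤ β) (hf : f ∈ HolderClass d β 1)
    (x y : Fin d → ℝ) : ‖f x - f y‖ ≤ dist x y := by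
  classical
  have hfl : 0 < ⌊β⌋₊ := Nat.floor_pos.2 hβ1
  have hdiff : Differentiable ℝ f := hf.1.differentiable (by exact_mod_cast hfl.ne')
  set S : Fin d → ℝ≥0∞ := fun i => ⨆ z, (‖pderiv' i f z‖₊ : ℝ≥0∞) with hSdef
  have hS : ∑ i, S i ≤ 1 := by
    have hinj : Function.Injective (fun i : Fin d =>
        (⟨Pi.single i 1, by simp [Finset.sum_pi_single', hβ1]⟩ :
          {s : Fin d → ℕ // ∑ j, s j ≤ ⌊β⌋₊})) := by
      intro i j hij
      have h : (Pi.single i 1 : Fin d → ℕ) i = (Pi.single j 1 : Fin d → ℕ) i :=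
        congrFun (congrArg Subtype.val hij) i
      by_contra hne
      rw [Pi.single_eq_same, Pi.single_eq_of_ne hne] at h
      exact one_ne_zero h
    have hsum := ENNReal.sum_le_tsum
      (f := fun s : {s : Fin d → ℕ // ∑ j, s j ≤ ⌊β⌋₊} =>
        ⨆ z, (‖mpderiv s.1 f z‖₊ : ℝ≥0∞))
      (Finset.univ.map ⟨_, hinj⟩)
    rw [Finset.sum_map] at hsum
    simp only [Function.Embedding.coeFn_mk, mpderiv_single] at hsum
    calc ∑ i, S i ≤ _ := hsum
    _ ≤ holderNorm β f := le_self_add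
    _ ≤ ENNReal.ofReal 1 := hf.2
    _ = 1 := ENNReal.ofReal_one
  have bound : ∀ z, ‖fderiv ℝ f z‖ ≤ 1 := by
    intro z
    have hz : ∑ i, ‖pderiv' i f z‖ ≤ 1 := by
      have h1 : ((∑ i, ‖pderiv' i f z‖₊ : ℝ≥0) : ℝ≥0∞) ≤ 1 := by
        rw [ENNReal.coe_finset_sum]
        exact le_trans (Finset.sum_le_sum fun i _ => le_iSup
          (fun z => (‖pderiv' i f z‖₊ : ℝ≥0∞)) z) hS
      have h2 : (∑ i, ‖pderiv' i f z‖₊ : ℝ≥0) ≤ 1 := by exact_mod_cast h1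
      calc ∑ i, ‖pderiv' i f z‖ = ((∑ i, ‖pderiv' i f z‖₊ : ℝ≥0) : ℝ) := by
            push_cast; rfl
      _ ≤ 1 := by exact_mod_cast h2
    refine ContinuousLinearMap.opNorm_le_bound _ zero_le_one (fun v => ?_)
    have hv : fderiv ℝ f z v = ∑ i, v i • pderiv' i f z := by
      conv_lhs => rw [← Finset.univ_sum_single v]
      rw [map_sum]
      refine Finset.sum_congr rfl fun i _ => ?_
      have h : Pi.single i (v i) = v i • (Pi.single i 1 : Fin d → ℝ) := by
        rw [← Pi.single_smul, smul_eq_mul, mul_one]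
      rw [h, ContinuousLinearMap.map_smul]; rfl
    rw [hv, one_mul]
    calc ‖∑ i, v i • pderiv' i f z‖ ≤ ∑ i, ‖v i • pderiv' i f z‖ := norm_sum_le _ _
    _ = ∑ i, |v i| * ‖pderiv' i f z‖ := by simp [norm_smul]
    _ ≤ ∑ i, ‖v‖ * ‖pderiv' i f z‖ := Finset.sum_le_sum fun i _ =>
        mul_le_mul_of_nonneg_right (by simpa using norm_le_pi_norm v i) (norm_nonneg _)
    _ = ‖v‖ * ∑ i, ‖pderiv' i f z‖ := by rw [Finset.mul_sum]
    _ ≤ ‖v‖ * 1 := mul_le_mul_of_nonneg_left hz (norm_nonneg v)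
    _ = ‖v‖ := mul_one _
  have h := convex_univ.norm_image_sub_le_of_norm_fderiv_le
    (fun z _ => hdiff z) (fun z _ => bound z) (Set.mem_univ y) (Set.mem_univ x)
  rw [one_mul, ← dist_eq_norm] at h
  exact h

end AuxProof

open Filter Topology MeasureTheory Set
open scoped ENNReal

/-- For Borel maps `G, G̃ : ℝ^l → ℝ^d` with `∫ ‖G̃ − G‖_∞ dν < ∞` and a
Borel probability measure `ν` on `ℝ^l`,
`‖G̃_♯ν − G_♯ν‖_{H^β(ℝ^d,ℝ,1)} ≤ (∫ ‖G̃(z) − G(z)‖_∞ dν(z))^{min(β,1)}`. -/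
theorem holder_ipm_pushforward_le
    (d l : ℕ) (β : ℝ) (hβ : 0 < β)
    (ν : Measure (Fin l → ℝ)) [IsProbabilityMeasure ν]
    (G Gt : (Fin l → ℝ) → (Fin d → ℝ)) (hG : Measurable G) (hGt : Measurable Gt)
    (hint : Integrable (fun z => dist (Gt z) (G z)) ν) :
    ipm (HolderClass d β 1) (ν.map Gt) (ν.map G) ≤
      (∫ z, dist (Gt z) (G z) ∂ν) ^ (min β 1) := by
  set p := min β 1 with hp
  have hp0 : 0 < p := lt_min hβ one_pos
  have hp1 : p ≤ 1 := min_le_right _ _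
  have hDnn : (0:ℝ) ≤ ∫ z, dist (Gt z) (G z) ∂ν := integral_nonneg fun z => dist_nonneg
  have hRHS : 0 ≤ (∫ z, dist (Gt z) (G z) ∂ν) ^ p := Real.rpow_nonneg hDnn p
  have hdistmeas : Measurable fun z => dist (Gt z) (G z) := hGt.dist hG
  have hrpowint : Integrable (fun z => dist (Gt z) (G z) ^ p) ν := by
    refine Integrable.mono' ((integrable_const (1:ℝ)).add hint)
      ((Real.continuous_rpow_const hp0.le).measurable.comp hdistmeas).aestronglyMeasurable
      (Eventually.of_forall fun z => ?_)
    rw [Real.norm_eq_abs, abs_of_nonneg (Real.rpow_nonneg dist_nonneg p)]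
    rcases le_total (dist (Gt z) (G z)) 1 with h | h
    · have h1 := Real.rpow_le_one dist_nonneg h hp0.le
      have h2 : (0:ℝ) ≤ dist (Gt z) (G z) := dist_nonneg
      simp only [Pi.add_apply]
      linarith
    · have h2 : dist (Gt z) (G z) ^ p ≤ dist (Gt z) (G z) ^ (1:ℝ) :=
        Real.rpow_le_rpow_of_exponent_le h hp1
      rw [Real.rpow_one] at h2
      simp only [Pi.add_apply]
      linarith
  have hjensen : ∫ z, dist (Gt z) (G z) ^ p ∂ν ≤ (∫ z, dist (Gt z) (G z) ∂ν) ^ p := by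
    refine ConcaveOn.le_map_integral (μ := ν) (s := Set.Ici (0:ℝ))
      (Real.concaveOn_rpow hp0.le hp1)
      (fun x _ => (Real.continuousAt_rpow_const x p (Or.inr hp0.le)).continuousWithinAt)
      isClosed_Ici
      (Eventually.of_forall fun z => dist_nonneg)
      hint ?_
    exact hrpowint
  unfold ipm
  refine Real.iSup_le ?_ hRHS
  rintro ⟨f, hf⟩
  have hcont : Continuous f := hf.1.continuous
  have hkey : ∀ x y, ‖f x - f y‖ ≤ dist x y ^ p := by
    rcases lt_or_ge β 1 with h | h
    · have hpe : p = β := min_eq_left h.le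
      rw [hpe]
      exact fun x y => holder_holder_lt hβ h hf x y
    · have hpe : p = 1 := min_eq_right h
      intro x y
      rw [hpe, Real.rpow_one]
      exact holder_lip h hf x y
  have hiGt : Integrable (fun z => f (Gt z)) ν :=
    Integrable.mono' (integrable_const (1:ℝ))
      ((hcont.measurable.comp hGt).aestronglyMeasurable)
      (Eventually.of_forall fun z => holder_bdd hf (Gt z))
  have hiG : Integrable (fun z => f (G z)) ν :=
    Integrable.mono' (integrable_const (1:ℝ))
      ((hcont.measurable.comp hG).aestronglyMeasurable)
      (Eventually.of_forall fun z => holder_bdd hf (G z))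
  have hmapGt : ∫ x, f x ∂(ν.map Gt) = ∫ z, f (Gt z) ∂ν :=
    integral_map hGt.aemeasurable hcont.aestronglyMeasurable
  have hmapG : ∫ x, f x ∂(ν.map G) = ∫ z, f (G z) ∂ν :=
    integral_map hG.aemeasurable hcont.aestronglyMeasurable
  simp only [hmapGt, hmapG]
  calc |∫ z, f (Gt z) ∂ν - ∫ z, f (G z) ∂ν|
      = |∫ z, (f (Gt z) - f (G z)) ∂ν| := by rw [integral_sub hiGt hiG]
  _ ≤ ∫ z, |f (Gt z) - f (G z)| ∂ν := by
      simpa [Real.norm_eq_abs] using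
        norm_integral_le_integral_norm (μ := ν) (fun z => f (Gt z) - f (G z))
  _ ≤ ∫ z, dist (Gt z) (G z) ^ p ∂ν := by
      refine integral_mono (hiGt.sub hiG).abs hrpowint fun z => ?_
      simpa [Real.norm_eq_abs] using hkey (Gt z) (G z)
  _ ≤ (∫ z, dist (Gt z) (G z) ∂ν) ^ p := hjensen
end

section
/- Let μ be a Borel probability measure on a measurable space, let X_1, …, X_n be i.i.d. with law μ, and let μ_n = n^{-1} Σ_{i=1}^n δ_{X_i} be the empirical measure. If A_1, …, A_m are pairwise disjoint measurable sets whose union is a measurable set T, then E[ Σ_{j=1}^m |μ_n(A_j) − μ(A_j)| ] ≤ √( m · μ(T) / n ). -/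
open Filter Topology MeasureTheory Set
open scoped ENNReal NNReal

open Filter Topology MeasureTheory Set Function
open scoped ENNReal

section AuxHelpers

variable {Ω : Type*} [MeasurableSpace Ω]

/-- Integral of a product of one function applied to distinct coordinates, over a finite
product of copies of a probability measure. -/
lemma pi_integral_prod (μ : Measure Ω) [IsProbabilityMeasure μ]
    {n : ℕ} (g : Ω → ℝ) (s : Finset (Fin n)) :
    (∫ x : Fin n → Ω, ∏ i ∈ s, g (x i) ∂(Measure.pi fun _ => μ))
      = (∫ y, g y ∂μ) ^ s.card := by
  classical
  letI : MeasureSpace Ω := ⟨μ⟩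
  haveI : IsProbabilityMeasure (volume : Measure Ω) := ‹IsProbabilityMeasure μ›
  set f : Fin n → Ω → ℝ := fun j => if j ∈ s then g else fun _ => 1 with hf
  have h1 : ∀ x : Fin n → Ω, (∏ i ∈ s, g (x i)) = ∏ j, f j (x j) := by
    intro x
    rw [← Finset.prod_subset (Finset.subset_univ s) (fun j _ hj => by simp [hf, hj])]
    exact Finset.prod_congr rfl fun j hj => by simp [hf, hj]
  have h2 : (Measure.pi fun _ : Fin n => μ) = (volume : Measure (Fin n → Ω)) :=
    (MeasureTheory.volume_pi).symm
  calc (∫ x : Fin n → Ω, ∏ i ∈ s, g (x i) ∂(Measure.pi fun _ => μ))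
      = ∫ x : Fin n → Ω, ∏ j, f j (x j) := by
        rw [h2]; exact integral_congr_ae (Filter.Eventually.of_forall h1)
    _ = ∏ j, ∫ y, f j y := MeasureTheory.integral_fintype_prod_eq_prod f
    _ = (∫ y, g y ∂μ) ^ s.card := by
      rw [← Finset.prod_subset (Finset.subset_univ s)
        (fun j _ hj => by simp [hf, hj])]
      rw [Finset.prod_congr rfl
        (fun j hj => by simp only [hf, if_pos hj]; rfl : ∀ j ∈ s, (∫ y, f j y) = ∫ y, g y ∂μ)]
      rw [Finset.prod_const]

/-- Integral of a function of a single coordinate over a product measure. -/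
lemma pi_integral_eval (μ : Measure Ω) [IsProbabilityMeasure μ]
    {n : ℕ} (g : Ω → ℝ) (i : Fin n) :
    (∫ x : Fin n → Ω, g (x i) ∂(Measure.pi fun _ => μ)) = ∫ y, g y ∂μ := by
  simpa using pi_integral_prod μ g {i}

/-- Integral of a product over two distinct coordinates factorizes. -/
lemma pi_integral_eval_mul (μ : Measure Ω) [IsProbabilityMeasure μ]
    {n : ℕ} (g : Ω → ℝ) {i k : Fin n} (hik : i ≠ k) :
    (∫ x : Fin n → Ω, g (x i) * g (x k) ∂(Measure.pi fun _ => μ)) = (∫ y, g y ∂μ) ^ 2 := by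
  classical
  have h := pi_integral_prod μ g {i, k}
  rw [Finset.card_insert_of_notMem (by simpa using hik), Finset.card_singleton] at h
  rw [← h]
  exact integral_congr_ae (Filter.Eventually.of_forall fun x =>
    (Finset.prod_pair (f := fun j => g (x j)) hik).symm)

/-- Cauchy-Schwarz: `E|F| ≤ √(E F²)` on a probability space. -/
lemma integral_abs_le_sqrt_integral_sq {α : Type*} [MeasurableSpace α]
    (P : Measure α) [IsProbabilityMeasure P] {F : α → ℝ} (hF : MeasureTheory.MemLp F 2 P) :
    (∫ x, |F x| ∂P) ≤ Real.sqrt (∫ x, F x ^ 2 ∂P) := by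
  have h2 : MeasureTheory.MemLp (fun x => |F x|) 2 P := hF.abs
  have hv := ProbabilityTheory.variance_nonneg (fun x => |F x|) P
  rw [ProbabilityTheory.variance_eq_sub h2] at hv
  simp only [Pi.pow_apply, sq_abs] at hv
  have h0 : 0 ≤ ∫ x, |F x| ∂P := integral_nonneg fun x => abs_nonneg _
  have hle : (∫ x, |F x| ∂P) ^ 2 ≤ ∫ x, F x ^ 2 ∂P := by linarith
  calc (∫ x, |F x| ∂P) = Real.sqrt ((∫ x, |F x| ∂P) ^ 2) := (Real.sqrt_sq h0).symm
    _ ≤ Real.sqrt (∫ x, F x ^ 2 ∂P) := Real.sqrt_le_sqrt hle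

/-- A measurable, uniformly bounded real function is integrable w.r.t. a finite measure. -/
lemma integrable_of_forall_bound {α : Type*} [MeasurableSpace α] {P : Measure α}
    [IsFiniteMeasure P] {f : α → ℝ} (hf : Measurable f) (C : ℝ) (h : ∀ x, |f x| ≤ C) :
    Integrable f P :=
  (integrable_const C).mono' hf.aestronglyMeasurable
    (Filter.Eventually.of_forall fun x => by simpa using h x)

/-- The empirical measure of a measurable set, as a real number. -/
lemma empMeas_toReal {n : ℕ} (x : Fin n → Ω) {A : Set Ω} (hA : MeasurableSet A) :
    ((empMeas x) A).toReal = (∑ i, A.indicator (fun _ => (1 : ℝ)) (x i)) / n := by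
  classical
  have h1 : (empMeas x) A = (n : ℝ≥0∞)⁻¹ * ∑ i, Measure.dirac (x i) A := by
    rw [empMeas, Measure.smul_apply, Measure.finset_sum_apply, smul_eq_mul]
  have h2 : ∀ i : Fin n, (Measure.dirac (x i) A).toReal
      = A.indicator (fun _ => (1 : ℝ)) (x i) := by
    intro i
    rw [Measure.dirac_apply' _ hA]
    by_cases h : x i ∈ A <;> simp [h]
  have h3 : ∀ i : Fin n, Measure.dirac (x i) A ≠ ∞ := fun i => measure_ne_top _ _
  rw [h1, ENNReal.toReal_mul, ENNReal.toReal_inv, ENNReal.toReal_natCast,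
    ENNReal.toReal_sum (fun i _ => h3 i)]
  rw [Finset.sum_congr rfl fun i _ => h2 i]
  rw [inv_mul_eq_div]

/-- Expected deviation of the empirical measure of a single set. -/
lemma emp_dev_le (μ : Measure Ω) [IsProbabilityMeasure μ]
    {n : ℕ} (hn : 0 < n) {A : Set Ω} (hA : MeasurableSet A) :
    (∫ x : Fin n → Ω, |((empMeas x) A).toReal - (μ A).toReal| ∂(Measure.pi fun _ => μ))
      ≤ Real.sqrt ((μ A).toReal / n) := by
  classical
  haveI : IsProbabilityMeasure (Measure.pi fun _ : Fin n => μ) := by infer_instance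
  set p : ℝ := (μ A).toReal with hp
  have hp0 : 0 ≤ p := ENNReal.toReal_nonneg
  have hp1 : p ≤ 1 := by
    have h := ENNReal.toReal_mono (measure_ne_top μ Set.univ)
      (measure_mono (Set.subset_univ A))
    simpa [hp] using h
  have hnpos : (0 : ℝ) < n := by exact_mod_cast hn
  set g : Ω → ℝ := fun y => A.indicator (fun _ => (1 : ℝ)) y - p with hg
  have hg_meas : Measurable g := (measurable_const.indicator hA).sub measurable_const
  have hind01 : ∀ y, 0 ≤ A.indicator (fun _ => (1 : ℝ)) y ∧
      A.indicator (fun _ => (1 : ℝ)) y ≤ 1 := by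
    intro y; by_cases h : y ∈ A <;> simp [h]
  have hg_bd : ∀ y, |g y| ≤ 2 := by
    intro y
    have h := hind01 y
    rw [hg, abs_le]
    constructor <;> simp <;> linarith [h.1, h.2]
  have hind_int : Integrable (A.indicator (fun _ => (1 : ℝ))) μ :=
    (integrable_const 1).indicator hA
  have hgint : ∫ y, g y ∂μ = 0 := by
    rw [hg]
    rw [integral_sub hind_int (integrable_const p), integral_indicator_const (1 : ℝ) hA,
      integral_const]
    simp [hp, measureReal_def]
  have hg2 : ∫ y, g y * g y ∂μ = p - p ^ 2 := by
    have hpt : ∀ y, g y * g y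
        = (1 - 2 * p) * A.indicator (fun _ => (1 : ℝ)) y + p ^ 2 := by
      intro y
      by_cases h : y ∈ A <;> simp [hg, h] <;> ring
    calc ∫ y, g y * g y ∂μ
        = ∫ y, ((1 - 2 * p) * A.indicator (fun _ => (1 : ℝ)) y + p ^ 2) ∂μ :=
          integral_congr_ae (Filter.Eventually.of_forall hpt)
      _ = (1 - 2 * p) * (∫ y, A.indicator (fun _ => (1 : ℝ)) y ∂μ) + p ^ 2 := by
          rw [integral_add (hind_int.const_mul _) (integrable_const _),
            integral_const_mul, integral_const]
          simp
      _ = p - p ^ 2 := by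
          rw [integral_indicator_const (1 : ℝ) hA]
          simp [hp, measureReal_def]
          ring
  set F : (Fin n → Ω) → ℝ := fun x => ∑ i, g (x i) with hF
  have hF_meas : Measurable F :=
    Finset.measurable_sum _ fun i _ => hg_meas.comp (measurable_pi_apply i)
  have hF_bd : ∀ x, |F x| ≤ (n : ℝ) * 2 := by
    intro x
    calc |F x| ≤ ∑ i, |g (x i)| := Finset.abs_sum_le_sum_abs _ _
      _ ≤ ∑ _i : Fin n, (2 : ℝ) := Finset.sum_le_sum fun i _ => hg_bd _
      _ = (n : ℝ) * 2 := by simp [Finset.sum_const, mul_comm]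
  have hF_mem : MeasureTheory.MemLp F 2 (Measure.pi fun _ : Fin n => μ) :=
    (MeasureTheory.memLp_top_of_bound hF_meas.aestronglyMeasurable _
      (Filter.Eventually.of_forall fun x => by simpa using hF_bd x)).mono_exponent le_top
  have hterm_int : ∀ i k : Fin n,
      Integrable (fun x : Fin n → Ω => g (x i) * g (x k)) (Measure.pi fun _ : Fin n => μ) := by
    intro i k
    refine integrable_of_forall_bound
      ((hg_meas.comp (measurable_pi_apply i)).mul (hg_meas.comp (measurable_pi_apply k))) 4 ?_
    intro x
    rw [abs_mul]
    have h1 := hg_bd (x i); have h2 := hg_bd (x k)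
    nlinarith [abs_nonneg (g (x i)), abs_nonneg (g (x k))]
  have hF2 : ∫ x, F x ^ 2 ∂(Measure.pi fun _ : Fin n => μ) = n * (p - p ^ 2) := by
    have hexp : ∀ x : Fin n → Ω, F x ^ 2 = ∑ i, ∑ k, g (x i) * g (x k) := by
      intro x; rw [hF, sq, Finset.sum_mul_sum]
    calc ∫ x, F x ^ 2 ∂(Measure.pi fun _ : Fin n => μ)
        = ∫ x, ∑ i, ∑ k, g (x i) * g (x k) ∂(Measure.pi fun _ : Fin n => μ) :=
          integral_congr_ae (Filter.Eventually.of_forall hexp)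
      _ = ∑ i, ∑ k, ∫ x, g (x i) * g (x k) ∂(Measure.pi fun _ : Fin n => μ) := by
          rw [integral_finset_sum _ fun i _ => integrable_finset_sum _ fun k _ => hterm_int i k]
          exact Finset.sum_congr rfl fun i _ =>
            integral_finset_sum _ fun k _ => hterm_int i k
      _ = ∑ i : Fin n, ∑ k : Fin n, (if i = k then p - p ^ 2 else 0) := by
          refine Finset.sum_congr rfl fun i _ => Finset.sum_congr rfl fun k _ => ?_
          by_cases h : i = k
          · subst h
            rw [if_pos rfl]
            exact (pi_integral_eval μ (fun y => g y * g y) i).trans hg2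
          · rw [if_neg h, pi_integral_eval_mul μ g h, hgint]
            norm_num
      _ = n * (p - p ^ 2) := by
          simp [Finset.sum_ite_eq, Finset.sum_const, mul_comm]
          ring
  have hrw : ∀ x : Fin n → Ω, |((empMeas x) A).toReal - p| = |F x| / n := by
    intro x
    rw [empMeas_toReal x hA, hF]
    have h1 : (∑ i, A.indicator (fun _ => (1 : ℝ)) (x i)) / n - p
        = (∑ i, (A.indicator (fun _ => (1 : ℝ)) (x i) - p)) / n := by
      rw [Finset.sum_sub_distrib, Finset.sum_const, Finset.card_univ, Fintype.card_fin,
        nsmul_eq_mul]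
      field_simp
    rw [h1, abs_div, abs_of_pos hnpos]
  calc (∫ x : Fin n → Ω, |((empMeas x) A).toReal - p| ∂(Measure.pi fun _ : Fin n => μ))
      = ∫ x, |F x| / n ∂(Measure.pi fun _ : Fin n => μ) :=
        integral_congr_ae (Filter.Eventually.of_forall hrw)
    _ = (∫ x, |F x| ∂(Measure.pi fun _ : Fin n => μ)) / n := integral_div _ _
    _ ≤ Real.sqrt (∫ x, F x ^ 2 ∂(Measure.pi fun _ : Fin n => μ)) / n := by
        gcongr
        exact integral_abs_le_sqrt_integral_sq _ hF_mem
    _ = Real.sqrt ((n : ℝ) * (p - p ^ 2)) / n := by rw [hF2]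
    _ ≤ Real.sqrt ((n : ℝ) * p) / n := by
        gcongr
        nlinarith [sq_nonneg p]
    _ = Real.sqrt (p / n) := by
        rw [show (n : ℝ) * p = (p / n) * (n : ℝ) ^ 2 by field_simp]
        rw [Real.sqrt_mul (by positivity) ((n : ℝ) ^ 2), Real.sqrt_sq hnpos.le]
        field_simp

end AuxHelpers

/-- Let `μ` be a probability measure, `X₁, …, X_n` i.i.d. with law `μ` and
`μ_n` the empirical measure.  If `A₁, …, A_m` are pairwise disjoint measurable sets with
union `T`, then `E[Σ_j |μ_n(A_j) − μ(A_j)|] ≤ √(m ⋅ μ(T) / n)`. -/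
theorem expected_empirical_partition_deviation
    {Ω : Type*} [MeasurableSpace Ω] (μ : Measure Ω) [IsProbabilityMeasure μ]
    (n m : ℕ) (hn : 0 < n)
    (A : Fin m → Set Ω) (hA : ∀ j, MeasurableSet (A j))
    (hdisj : Pairwise (Disjoint on A)) :
    (∫ x : Fin n → Ω, (∑ j, |((empMeas x) (A j)).toReal - (μ (A j)).toReal|)
        ∂(Measure.pi fun _ => μ))
      ≤ Real.sqrt ((m : ℝ) * (μ (⋃ j, A j)).toReal / (n : ℝ)) := by
  classical
  haveI : IsProbabilityMeasure (Measure.pi fun _ : Fin n => μ) := by infer_instance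
  have hnpos : (0 : ℝ) < n := by exact_mod_cast hn
  have hint : ∀ j : Fin m, Integrable
      (fun x : Fin n → Ω => |((empMeas x) (A j)).toReal - (μ (A j)).toReal|)
      (Measure.pi fun _ : Fin n => μ) := by
    intro j
    have heq : (fun x : Fin n → Ω => |((empMeas x) (A j)).toReal - (μ (A j)).toReal|)
        = fun x => |(∑ i, (A j).indicator (fun _ => (1 : ℝ)) (x i)) / n - (μ (A j)).toReal| :=
      funext fun x => by rw [empMeas_toReal x (hA j)]
    rw [heq]
    have hmeas : Measurable fun x : Fin n → Ω =>
        |(∑ i, (A j).indicator (fun _ => (1 : ℝ)) (x i)) / n - (μ (A j)).toReal| := by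
      apply Measurable.abs
      apply Measurable.sub _ measurable_const
      exact (Finset.measurable_sum _ fun i _ =>
        (measurable_const.indicator (hA j)).comp (measurable_pi_apply i)).div_const _
    refine integrable_of_forall_bound hmeas 2 ?_
    intro x
    have h0 : (0 : ℝ) ≤ ∑ i, (A j).indicator (fun _ => (1 : ℝ)) (x i) :=
      Finset.sum_nonneg fun i _ => Set.indicator_nonneg (fun _ _ => zero_le_one) _
    have h1 : (∑ i, (A j).indicator (fun _ => (1 : ℝ)) (x i)) ≤ (n : ℝ) := by
      calc (∑ i, (A j).indicator (fun _ => (1 : ℝ)) (x i)) ≤ ∑ _i : Fin n, (1 : ℝ) :=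
            Finset.sum_le_sum fun i _ => Set.indicator_le_self' (fun _ _ => zero_le_one) _
        _ = (n : ℝ) := by simp
    have hq0 : (0 : ℝ) ≤ (∑ i, (A j).indicator (fun _ => (1 : ℝ)) (x i)) / n := by positivity
    have hq1 : (∑ i, (A j).indicator (fun _ => (1 : ℝ)) (x i)) / n ≤ 1 := by
      rw [div_le_one hnpos]; exact h1
    have hp0 : (0 : ℝ) ≤ (μ (A j)).toReal := ENNReal.toReal_nonneg
    have hp1 : (μ (A j)).toReal ≤ 1 := by
      have h := ENNReal.toReal_mono (measure_ne_top μ Set.univ)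
        (measure_mono (Set.subset_univ (A j)))
      simpa using h
    rw [abs_abs, abs_le]; constructor <;> linarith
  rw [integral_finset_sum _ fun j _ => hint j]
  have hsum : ∑ j : Fin m, (μ (A j)).toReal = (μ (⋃ j, A j)).toReal := by
    rw [measure_iUnion hdisj hA, tsum_fintype,
      ENNReal.toReal_sum fun j _ => measure_ne_top μ (A j)]
  have hq0 : ∀ j : Fin m, (0 : ℝ) ≤ (μ (A j)).toReal / n := fun j => by positivity
  calc (∑ j : Fin m, ∫ x : Fin n → Ω, |((empMeas x) (A j)).toReal - (μ (A j)).toReal|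
          ∂(Measure.pi fun _ : Fin n => μ))
      ≤ ∑ j : Fin m, Real.sqrt ((μ (A j)).toReal / n) :=
        Finset.sum_le_sum fun j _ => emp_dev_le μ hn (hA j)
    _ ≤ Real.sqrt ((m : ℝ) * (μ (⋃ j, A j)).toReal / n) := by
        have hss : (0 : ℝ) ≤ ∑ j : Fin m, Real.sqrt ((μ (A j)).toReal / n) :=
          Finset.sum_nonneg fun j _ => Real.sqrt_nonneg _
        have hcs := sq_sum_le_card_mul_sum_sq (s := (Finset.univ : Finset (Fin m)))
          (f := fun j => Real.sqrt ((μ (A j)).toReal / n))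
        have hsq : ∀ j : Fin m, Real.sqrt ((μ (A j)).toReal / n) ^ 2 = (μ (A j)).toReal / n :=
          fun j => Real.sq_sqrt (hq0 j)
        rw [Finset.sum_congr rfl fun j _ => hsq j] at hcs
        have hcs' : (∑ j : Fin m, Real.sqrt ((μ (A j)).toReal / n)) ^ 2
            ≤ (m : ℝ) * (μ (⋃ j, A j)).toReal / n := by
          calc (∑ j : Fin m, Real.sqrt ((μ (A j)).toReal / n)) ^ 2
              ≤ (m : ℝ) * ∑ j : Fin m, (μ (A j)).toReal / n := by simpa using hcs
            _ = (m : ℝ) * (μ (⋃ j, A j)).toReal / n := by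
                rw [← Finset.sum_div, hsum, mul_div_assoc]
        calc (∑ j : Fin m, Real.sqrt ((μ (A j)).toReal / n))
            = Real.sqrt ((∑ j : Fin m, Real.sqrt ((μ (A j)).toReal / n)) ^ 2) :=
              (Real.sqrt_sq hss).symm
          _ ≤ Real.sqrt ((m : ℝ) * (μ (⋃ j, A j)).toReal / n) := Real.sqrt_le_sqrt hcs'
end
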